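/- arXiv:2206.03533 — 6 statements merged into one kernel-verified Lean document; each statement's English description precedes it below -/
import Mathlib

section
/- Every GV-torsion R-module is absolutely w-pure. -/
open CategoryTheory

universe u

noncomputable section

variable (R : Type u) [CommRing R]

/-- The Ext group `Ext^n_R(M, N)` as an `R`-module (via `ModuleCat`). -/
def extMod (M N : Type u) [AddCommGroup M] [Module R M]
    [AddCommGroup N] [Module R N] (n : ℕ) : ModuleCat R :=
  ((Ext R (ModuleCat R) n).obj (Opposite.op (ModuleCat.of R M))).obj (ModuleCat.of R N)

/-- `J` is a Glaz–Vasconcelos ideal: finitely generated and the natural map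
`R → Hom_R(J, R)` is bijective. -/
def IsGVIdeal (J : Ideal R) : Prop :=
  J.FG ∧ Function.Bijective (fun r : R => (r • J.subtype : J →ₗ[R] R))

/-- A module is GV-torsion if every element is annihilated by some GV-ideal. -/
def IsGVTorsion (M : Type u) [AddCommGroup M] [Module R M] : Prop :=
  ∀ x : M, ∃ J : Ideal R, IsGVIdeal R J ∧ ∀ j ∈ J, j • x = 0

/-- An ideal `I` is a `w`-ideal if it is `w`-closed: whenever `J x ⊆ I` for some
GV-ideal `J`, one has `x ∈ I`. -/
def IsWIdeal (I : Ideal R) : Prop :=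
  ∀ (x : R) (J : Ideal R), IsGVIdeal R J → (∀ j ∈ J, j * x ∈ I) → x ∈ I

/-- `R` is a DW-ring if every maximal ideal is a `w`-ideal. -/
def IsDWRing : Prop :=
  ∀ m : Ideal R, m.IsMaximal → IsWIdeal R m

/-- `A` is absolutely `w`-pure if `Ext^1_R(N, A)` is GV-torsion for every
finitely presented module `N`. -/
def IsAbsolutelyWPure (A : Type u) [AddCommGroup A] [Module R A] : Prop :=
  ∀ (N : Type u) [AddCommGroup N] [Module R N], Module.FinitePresentation R N →
    IsGVTorsion R (extMod R N A 1)

/-- `M` is `w`-FP-projective if `Ext^1_R(M, A) = 0` for every absolutely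
`w`-pure module `A`. -/
def IsWFPProjective (M : Type u) [AddCommGroup M] [Module R M] : Prop :=
  ∀ (A : Type u) [AddCommGroup A] [Module R A], IsAbsolutelyWPure R A →
    Subsingleton (extMod R M A 1)

end

namespace GVAux

open CategoryTheory Limits

variable {R : Type u} [CommRing R]


lemma gv_apply (J : Ideal R) (r : R) (x : J) :
    (r • J.subtype : J →ₗ[R] R) x = r * (x : R) := rfl

lemma isGVIdeal_top : IsGVIdeal R (⊤ : Ideal R) := by
  constructor
  · exact ⟨{1}, by simp⟩
  constructor
  · intro r s h
    have := congrFun (congrArg DFunLike.coe h) ⟨1, trivial⟩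
    simpa [gv_apply] using this
  · intro f
    refine ⟨f ⟨1, trivial⟩, ?_⟩
    ext ⟨x, hx⟩
    have : (⟨x, trivial⟩ : (⊤ : Ideal R)) = x • ⟨1, trivial⟩ := by
      ext; simp
    rw [gv_apply, this, map_smul]
    simp [mul_comm]

lemma isGVIdeal_mul {J₁ J₂ : Ideal R} (h₁ : IsGVIdeal R J₁) (h₂ : IsGVIdeal R J₂) :
    IsGVIdeal R (J₁ * J₂) := by
  obtain ⟨hfg₁, hinj₁, hsurj₁⟩ := h₁
  obtain ⟨hfg₂, hinj₂, hsurj₂⟩ := h₂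
  have key₁ : ∀ r : R, (∀ j ∈ J₁, r * j = 0) → r = 0 := by
    intro r hr
    refine hinj₁ (a₂ := 0) ?_
    ext ⟨j, hj⟩
    simpa [gv_apply] using hr j hj
  have key₂ : ∀ r : R, (∀ j ∈ J₂, r * j = 0) → r = 0 := by
    intro r hr
    refine hinj₂ (a₂ := 0) ?_
    ext ⟨j, hj⟩
    simpa [gv_apply] using hr j hj
  refine ⟨Submodule.FG.mul hfg₁ hfg₂, ?_, ?_⟩
  · intro r s h
    rw [← sub_eq_zero]
    apply key₂
    intro a ha
    apply key₁
    intro j hj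
    have := congrFun (congrArg DFunLike.coe h) ⟨j * a, Ideal.mul_mem_mul hj ha⟩
    simp only [gv_apply] at this
    linear_combination this
  · intro f
    have exg : ∀ a : J₂, ∃ g : R, ∀ j : J₁, g * (j : R) = f ⟨(j : R) * (a : R),
        Ideal.mul_mem_mul j.2 a.2⟩ := by
      intro a
      let mulmap : J₁ →ₗ[R] (J₁ * J₂ : Ideal R) :=
        { toFun := fun j : J₁ => (⟨(j : R) * (a : R), Ideal.mul_mem_mul j.2 a.2⟩ : (J₁ * J₂))
          map_add' := by intro x y; ext; simp [add_mul]
          map_smul' := by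
            intro r x
            ext
            simp only [RingHom.id_apply, SetLike.val_smul, smul_eq_mul]
            ring }
      obtain ⟨g, hg⟩ := hsurj₁ (LinearMap.comp f mulmap)
      exact ⟨g, fun j => congrFun (congrArg DFunLike.coe hg) j⟩
    choose g hg using exg
    have guniq : ∀ (a : J₂) (r : R), (∀ j : J₁, r * (j : R) = f ⟨(j : R) * (a : R),
        Ideal.mul_mem_mul j.2 a.2⟩) → r = g a := by
      intro a r hr
      apply hinj₁
      ext j
      simp only [gv_apply]
      rw [hr j, hg a j]
    have glin : ∃ r : R, ∀ a : J₂, r * (a : R) = g a := by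
      obtain ⟨r, hr⟩ := hsurj₂
        { toFun := g
          map_add' := by
            intro x y
            refine (guniq (x + y) (g x + g y) ?_).symm
            intro j
            have e : (⟨(j : R) * ((x + y : J₂) : R), Ideal.mul_mem_mul j.2 (x + y).2⟩ :
                (J₁ * J₂)) =
                ⟨(j : R) * (x : R), Ideal.mul_mem_mul j.2 x.2⟩ +
                ⟨(j : R) * (y : R), Ideal.mul_mem_mul j.2 y.2⟩ := by
              ext; push_cast; ring
            rw [e, map_add, add_mul, hg x j, hg y j]
          map_smul' := by
            intro c x
            refine (guniq (c • x) (c * g x) ?_).symm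
            intro j
            have e : (⟨(j : R) * ((c • x : J₂) : R), Ideal.mul_mem_mul j.2 (c • x).2⟩ :
                (J₁ * J₂)) =
                c • ⟨(j : R) * (x : R), Ideal.mul_mem_mul j.2 x.2⟩ := by
              ext
              simp only [SetLike.val_smul, smul_eq_mul]
              ring
            rw [e, map_smul, smul_eq_mul, ← hg x j]
            ring }
      refine ⟨r, fun a => ?_⟩
      exact congrFun (congrArg DFunLike.coe hr) a
    obtain ⟨r, hr⟩ := glin
    refine ⟨r, ?_⟩
    ext ⟨x, hx⟩
    simp only [gv_apply]
    refine Submodule.mul_induction_on' (C := fun z hz => r * z = f ⟨z, hz⟩) ?_ ?_ hx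
    · intro m hm n hn
      have h1 : r * n = g ⟨n, hn⟩ := hr ⟨n, hn⟩
      have h2 : g ⟨n, hn⟩ * m = f ⟨m * n, Ideal.mul_mem_mul hm hn⟩ := hg ⟨n, hn⟩ ⟨m, hm⟩
      calc r * (m * n) = (r * n) * m := by ring
        _ = f ⟨m * n, Ideal.mul_mem_mul hm hn⟩ := by rw [h1, h2]
        _ = f ⟨m * n, _⟩ := rfl
    · intro x hx y hy ihx ihy
      have e : (⟨x + y, add_mem hx hy⟩ : (J₁ * J₂)) = ⟨x, hx⟩ + ⟨y, hy⟩ := rfl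
      rw [mul_add, ihx, ihy, e, map_add]

lemma isGVIdeal_prod {ι : Type*} (s : Finset ι) (J : ι → Ideal R)
    (h : ∀ i ∈ s, IsGVIdeal R (J i)) : IsGVIdeal R (∏ i ∈ s, J i) := by
  classical
  induction s using Finset.induction with
  | empty => simpa using isGVIdeal_top
  | @insert i s hi ih =>
    rw [Finset.prod_insert hi]
    exact isGVIdeal_mul (h i (Finset.mem_insert_self i s))
      (ih fun j hj => h j (Finset.mem_insert_of_mem hj))

lemma isGVTorsion_of_surjective {M P : Type u} [AddCommGroup M] [Module R M]
    [AddCommGroup P] [Module R P] (f : M →ₗ[R] P) (hf : Function.Surjective f)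
    (hM : IsGVTorsion R M) : IsGVTorsion R P := by
  intro y
  obtain ⟨x, rfl⟩ := hf y
  obtain ⟨J, hJ, hJx⟩ := hM x
  exact ⟨J, hJ, fun j hj => by rw [← map_smul, hJx j hj, map_zero]⟩

lemma isGVTorsion_submodule {M : Type u} [AddCommGroup M] [Module R M]
    (S : Submodule R M) (hM : IsGVTorsion R M) : IsGVTorsion R S := by
  intro x
  obtain ⟨J, hJ, hJx⟩ := hM (x : M)
  exact ⟨J, hJ, fun j hj => Subtype.ext (by simpa using hJx j hj)⟩

lemma isGVTorsion_linearMap {M A : Type u} [AddCommGroup M] [Module R M]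
    [AddCommGroup A] [Module R A] (hfin : Module.Finite R M)
    (hA : IsGVTorsion R A) : IsGVTorsion R (M →ₗ[R] A) := by
  classical
  obtain ⟨s, hs⟩ := Module.finite_def.1 hfin
  intro f
  choose c hc hc0 using fun m : M => hA (f m)
  refine ⟨∏ m ∈ s, c m, isGVIdeal_prod s c (fun m _ => hc m), fun j hj => ?_⟩
  have hjm : ∀ m ∈ s, j ∈ c m := fun m hm =>
    Ideal.prod_le_inf.trans (Finset.inf_le hm) hj
  ext x
  have hx : x ∈ Submodule.span R (s : Set M) := hs ▸ Submodule.mem_top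
  show j • f x = 0
  refine Submodule.span_induction ?_ ?_ ?_ ?_ hx
  · intro m hm
    exact hc0 m j (hjm m hm)
  · simp
  · intro y z _ _ hy hz
    rw [map_add, smul_add, hy, hz, add_zero]
  · intro r y _ hy
    rw [map_smul, smul_comm, hy, smul_zero]

section Resolution

variable {N : Type u} [AddCommGroup N] [Module R N]
variable {a b : ℕ}

variable {N : Type u} [AddCommGroup N] [Module R N]
variable {a b : ℕ}

/-- The beginning of a resolution from a finite presentation. -/
noncomputable def resComplex (d : (Fin b → R) →ₗ[R] (Fin a → R)) : ChainComplex (ModuleCat.{u} R) ℕ :=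
  ChainComplex.mk' (ModuleCat.of R (Fin a → R)) (ModuleCat.of R (Fin b → R))
    (ModuleCat.ofHom d)
    (fun {X₀ X₁} f => ⟨Projective.syzygies f, Projective.d f, by
      show Projective.π (kernel f) ≫ kernel.ι f ≫ f = 0
      simp⟩)

lemma resComplex_X_0 (d : (Fin b → R) →ₗ[R] (Fin a → R)) :
    (resComplex d).X 0 = ModuleCat.of R (Fin a → R) := rfl

lemma resComplex_X_1 (d : (Fin b → R) →ₗ[R] (Fin a → R)) :
    (resComplex d).X 1 = ModuleCat.of R (Fin b → R) := rfl

lemma resComplex_d_1_0 (d : (Fin b → R) →ₗ[R] (Fin a → R)) :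
    (resComplex d).d 1 0 = ModuleCat.ofHom d := by
  simp [resComplex]

instance resComplex_projective (d : (Fin b → R) →ₗ[R] (Fin a → R)) (n : ℕ) :
    Projective ((resComplex d).X n) := by
  obtain (_ | _ | _ | n) := n
  · exact ModuleCat.projective_of_free (Pi.basisFun R (Fin a))
  · exact ModuleCat.projective_of_free (Pi.basisFun R (Fin b))
  · apply Projective.projective_over
  · apply Projective.projective_over

lemma resComplex_exactAt_succ (d : (Fin b → R) →ₗ[R] (Fin a → R)) (n : ℕ) :
    (resComplex d).ExactAt (n + 1) := by
  rw [HomologicalComplex.exactAt_iff' _ (n + 1 + 1) (n + 1) n (by simp) (by simp)]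
  dsimp [resComplex, HomologicalComplex.sc', HomologicalComplex.shortComplexFunctor',
      ChainComplex.mk', ChainComplex.mk]
  simp only [ChainComplex.of.d]
  match n with
  | 0 => exact exact_d_f _
  | n + 1 => exact exact_d_f _

/-- The projective resolution of a finitely presented module built from a presentation. -/
noncomputable def resolution (π : (Fin a → R) →ₗ[R] N) (hπ : Function.Surjective π)
    (d : (Fin b → R) →ₗ[R] (Fin a → R)) (hd : LinearMap.range d = LinearMap.ker π) :
    ProjectiveResolution (ModuleCat.of R N) where
  complex := resComplex d
  π := (ChainComplex.toSingle₀Equiv _ _).symm ⟨ModuleCat.ofHom π, by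
        rw [resComplex_d_1_0]
        ext x
        show π (d x) = 0
        rw [← LinearMap.mem_ker, ← hd]
        exact ⟨x, rfl⟩⟩
  quasiIso := ⟨fun n => by
    cases n with
    | zero =>
      rw [ChainComplex.quasiIsoAt₀_iff, ShortComplex.quasiIso_iff_of_zeros']
      · have w : ModuleCat.ofHom d ≫ ModuleCat.ofHom π = 0 := by
          apply ModuleCat.hom_ext; apply LinearMap.ext; intro x
          show π (d x) = 0
          rw [← LinearMap.mem_ker, ← hd]
          exact ⟨x, rfl⟩
        have hexact : (ShortComplex.mk (ModuleCat.ofHom d) (ModuleCat.ofHom π) w).Exact := by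
          rw [ShortComplex.moduleCat_exact_iff_range_eq_ker]
          exact hd
        have hepi : Epi (ShortComplex.mk (ModuleCat.ofHom d) (ModuleCat.ofHom π) w).g :=
          (ModuleCat.epi_iff_surjective (ModuleCat.ofHom π)).2 hπ
        refine (ShortComplex.exact_and_epi_g_iff_of_iso ?_).2 ⟨hexact, hepi⟩
        exact ShortComplex.isoMk (Iso.refl _) (Iso.refl _) (Iso.refl _)
            (by simp [resComplex_d_1_0]; erw [Category.id_comp])
              (by simp [ChainComplex.toSingle₀Equiv]; erw [Category.id_comp])
      all_goals rfl
    | succ n =>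
      rw [quasiIsoAt_iff_exactAt']
      · apply resComplex_exactAt_succ
      · apply ChainComplex.exactAt_succ_single_obj⟩


end Resolution

end GVAux

/-- Every GV-torsion module is absolutely `w`-pure. -/

theorem gvTorsion_isAbsolutelyWPure (R : Type u) [CommRing R]
    (A : Type u) [AddCommGroup A] [Module R A] (hA : IsGVTorsion R A) :
    IsAbsolutelyWPure R A := by
  classical
  intro N _ _ hN
  haveI := hN
  obtain ⟨a, π, hπ⟩ := Module.Finite.exists_fin' R N
  have hker : (LinearMap.ker π).FG := Module.FinitePresentation.fg_ker π hπ
  haveI : Module.Finite R (LinearMap.ker π) := Module.Finite.iff_fg.2 hker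
  obtain ⟨b, ρ, hρ⟩ := Module.Finite.exists_fin' R (LinearMap.ker π)
  set d : (Fin b → R) →ₗ[R] (Fin a → R) := (LinearMap.ker π).subtype ∘ₗ ρ with hd_def
  have hd : LinearMap.range d = LinearMap.ker π := by
    rw [hd_def, LinearMap.range_comp, LinearMap.range_eq_top.2 hρ, Submodule.map_top,
      Submodule.range_subtype]
  set P := GVAux.resolution π hπ d hd with hP
  set K := P.complex.linearYonedaObj R (ModuleCat.of R A) with hK
  set S := K.sc 1 with hS
  have e1 : extMod R N A 1 ≅ S.homology := P.isoExt 1 (ModuleCat.of R A)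
  have e2 : S.homology ≅ S.moduleCatLeftHomologyData.H := S.moduleCatHomologyIso
  -- `S.X₂ = K.X 1` is the module of linear maps `(Fin b → R) →ₗ[R] A`
  have hX2 : IsGVTorsion R S.X₂ := by
    exact GVAux.isGVTorsion_of_surjective (ModuleCat.homLinearEquiv (S := R)).symm.toLinearMap
      (ModuleCat.homLinearEquiv (S := R)).symm.surjective
      (GVAux.isGVTorsion_linearMap (M := Fin b → R) Module.Finite.pi hA)
  have hker' : IsGVTorsion R (LinearMap.ker S.g.hom) := GVAux.isGVTorsion_submodule _ hX2
  have h1 : IsGVTorsion R S.moduleCatLeftHomologyData.H :=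
    GVAux.isGVTorsion_of_surjective ((LinearMap.range S.moduleCatToCycles).mkQ) (Submodule.mkQ_surjective _) hker'
  have h2 : IsGVTorsion R S.homology :=
    GVAux.isGVTorsion_of_surjective e2.inv.hom
      (Function.Bijective.surjective (ConcreteCategory.bijective_of_isIso e2.inv)) h1
  exact GVAux.isGVTorsion_of_surjective e1.inv.hom
    (Function.Bijective.surjective (ConcreteCategory.bijective_of_isIso e1.inv)) h2
end

section
/- A commutative ring R is a DW-ring if and only if every finitely presented R-module is w-FP-projective. -/
open CategoryTheory

universe u

noncomputable section AuxProofs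

open CategoryTheory Limits

variable {R : Type u} [CommRing R]

/-- If `r` annihilates `A`, then `r` annihilates `Ext^1(N, A)`. -/
lemma smul_extMod_eq_zero {N A : Type u} [AddCommGroup N] [Module R N]
    [AddCommGroup A] [Module R A] (r : R) (hr : ∀ a : A, r • a = 0)
    (e : extMod R N A 1) : r • e = 0 := by
  let Nc := ModuleCat.of R N
  let Y := ModuleCat.of R A
  let P : ProjectiveResolution Nc := projectiveResolution Nc
  let K := P.complex.linearYonedaObj R Y
  let iso : extMod R N A 1 ≅ K.homology 1 := P.isoExt 1 Y
  have hi : ∀ x : (extMod R N A 1 : ModuleCat R), iso.inv (iso.hom x) = x := fun x => by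
    change (iso.hom ≫ iso.inv) x = x
    rw [iso.hom_inv_id]; rfl
  have hinj : Function.Injective iso.hom := fun a b h => by
    rw [← hi a, ← hi b]; exact congrArg (fun y => iso.inv y) h
  apply hinj
  rw [map_smul, map_zero]
  have hX : ∀ v : K.X 1, r • v = 0 := by
    intro v
    have : r • (show P.complex.X 1 ⟶ Y from v) = 0 := by
      apply ModuleCat.hom_ext
      apply LinearMap.ext
      intro x
      simp only [LinearMap.smul_apply, LinearMap.zero_apply]
      exact hr _
    exact this
  have hcyc : ∀ z : K.cycles 1, r • z = 0 := by
    intro z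
    have hmono : Function.Injective (K.iCycles 1) :=
      (ModuleCat.mono_iff_injective _).1 inferInstance
    apply hmono
    rw [map_smul, map_zero]
    exact hX _
  have hsurj : Function.Surjective (K.homologyπ 1) :=
    (ModuleCat.epi_iff_surjective _).1 inferInstance
  obtain ⟨z, hz⟩ := hsurj (iso.hom e)
  rw [← hz, ← map_smul, hcyc, map_zero]

/-- If `Ext^1(R/J, A)` vanishes then any map `J → A` extends to `R`. -/
lemma extension_of_subsingleton_extMod {J : Ideal R} {M A : Type u} [AddCommGroup M] [Module R M]
    [AddCommGroup A] [Module R A] (p : R →ₗ[R] M) (hp : Function.Surjective p)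
    (hker : LinearMap.ker p = J) (hss : Subsingleton (extMod R M A 1))
    (φ : J →ₗ[R] A) : ∃ ψ : R →ₗ[R] A, ∀ x : J, ψ (x : R) = φ x := by
  let Mc := ModuleCat.of R M
  let Y := ModuleCat.of R A
  let P : ProjectiveResolution Mc := projectiveResolution Mc
  let K := P.complex.linearYonedaObj R Y
  let iso : extMod R M A 1 ≅ K.homology 1 := P.isoExt 1 Y
  -- homology at 1 is subsingleton
  have hsub : Subsingleton ((K.homology 1 : ModuleCat R)) := by
    constructor; intro a b
    have hi : ∀ x : (K.homology 1 : ModuleCat R), iso.hom (iso.inv x) = x := fun x => by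
      change (iso.inv ≫ iso.hom) x = x
      rw [iso.inv_hom_id]; rfl
    rw [← hi a, ← hi b]
    exact congrArg (fun y => iso.hom y) (Subsingleton.elim _ _)
  have hex : K.ExactAt 1 := (HomologicalComplex.exactAt_iff_isZero_homology K 1).2
    (ModuleCat.isZero_of_subsingleton _)
  have hex' := (HomologicalComplex.exactAt_iff' K 0 1 2 (by simp) (by simp)).1 hex
  rw [ShortComplex.moduleCat_exact_iff] at hex'
  -- the augmentation
  let e0 : ((ChainComplex.single₀ (ModuleCat R)).obj Mc).X 0 ≅ Mc :=
    HomologicalComplex.singleObjXSelf (ComplexShape.down ℕ) 0 Mc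
  let π₀ : P.complex.X 0 ⟶ Mc := P.π.f 0 ≫ e0.hom
  let pm : ModuleCat.of R R ⟶ Mc := ModuleCat.ofHom p
  have hpm : Epi pm := (ModuleCat.epi_iff_surjective _).2 hp
  let α₀ : P.complex.X 0 ⟶ ModuleCat.of R R := Projective.factorThru π₀ pm
  have hα₀ : α₀ ≫ pm = π₀ := Projective.factorThru_comp _ _
  let α₀l : (P.complex.X 0 : Type u) →ₗ[R] R := α₀.hom
  have hα₀' : ∀ u : P.complex.X 0, p (α₀l u) = π₀ u := fun u =>
    congrArg (fun (f : P.complex.X 0 ⟶ Mc) => f u) hα₀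
  -- the lift to J
  have hmem : ∀ v : P.complex.X 1, α₀l (P.complex.d 1 0 v) ∈ J := by
    intro v
    have h0 : P.π.f 0 (P.complex.d 1 0 v) = 0 := by
      change (P.complex.d 1 0 ≫ P.π.f 0) v = 0
      rw [P.complex_d_comp_π_f_zero]; rfl
    have : p (α₀l (P.complex.d 1 0 v)) = 0 := by
      rw [hα₀']
      show e0.hom (P.π.f 0 (P.complex.d 1 0 v)) = 0
      rw [h0, map_zero]
    rw [← hker]
    exact LinearMap.mem_ker.2 this
  let α₁' : P.complex.X 1 →ₗ[R] J :=
    LinearMap.codRestrict (J : Submodule R R)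
      (α₀l.comp
        (show (P.complex.X 1 : Type u) →ₗ[R] (P.complex.X 0 : Type u) from (P.complex.d 1 0).hom)) hmem
  let f₁ : (K.X 1 : Type u) := show (P.complex.X 1 ⟶ Y) from ModuleCat.ofHom (φ.comp α₁')
  have hcoc : K.d 1 2 f₁ = 0 := by
    have : (show (P.complex.X 2 ⟶ Y) from K.d 1 2 f₁) = 0 := by
      apply ModuleCat.hom_ext
      apply LinearMap.ext
      intro w
      have hz : α₁' (P.complex.d 2 1 w) = 0 := by
        apply Subtype.ext
        show α₀l (P.complex.d 1 0 (P.complex.d 2 1 w)) = 0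
        have : P.complex.d 1 0 (P.complex.d 2 1 w) = 0 := by
          change (P.complex.d 2 1 ≫ P.complex.d 1 0) w = 0
          rw [HomologicalComplex.d_comp_d]; rfl
        rw [this, map_zero]
      show φ (α₁' (P.complex.d 2 1 w)) = 0
      rw [hz, map_zero]
    exact this
  obtain ⟨g, hg⟩ := hex' f₁ hcoc
  let gl : (P.complex.X 0 : Type u) →ₗ[R] A := (show (P.complex.X 0 ⟶ Y) from g).hom
  have hgl : ∀ v : P.complex.X 1, gl (P.complex.d 1 0 v) = φ (α₁' v) := by
    intro v
    exact congrArg (fun f => (show (P.complex.X 1 ⟶ Y) from f).hom v) hg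
  -- build ψ
  let σ : ((P.complex.X 0 : Type u) × J) →ₗ[R] R := α₀l.coprod (J : Submodule R R).subtype
  let τ : ((P.complex.X 0 : Type u) × J) →ₗ[R] A := gl.coprod φ
  -- π₀ is surjective
  have hπ₀ : Function.Surjective π₀ := by
    have h1 : Epi (P.π.f 0) := epi_of_isColimit_cofork P.isColimitCokernelCofork
    have h2 : Epi π₀ := epi_comp _ _
    exact (ModuleCat.epi_iff_surjective _).1 h2
  have hσ : Function.Surjective σ := by
    intro x
    obtain ⟨u, hu⟩ := hπ₀ (p x)
    have hxu : x - α₀l u ∈ J := by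
      rw [← hker]
      apply LinearMap.mem_ker.2
      rw [map_sub, hα₀' u, hu, sub_self]
    exact ⟨(u, ⟨x - α₀l u, hxu⟩), by
      show α₀l u + (x - α₀l u) = x
      ring⟩
  have hle : LinearMap.ker σ ≤ LinearMap.ker τ := by
    rintro ⟨u, j⟩ hz
    have hz' : α₀l u + (j : R) = 0 := hz
    -- π₀ u = 0
    have hπu : P.π.f 0 u = 0 := by
      have hj : p (j : R) = 0 := by
        have h2 : (j : R) ∈ LinearMap.ker p := by rw [hker]; exact j.2
        exact LinearMap.mem_ker.1 h2
      have : π₀ u = 0 := by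
        rw [← hα₀' u]
        show p (α₀l u) = 0
        have : α₀l u = -(j : R) := eq_neg_of_add_eq_zero_left hz'
        rw [this, map_neg, hj, neg_zero]
      have hinj : Function.Injective e0.hom := fun a b h => by
        have hi : ∀ x, e0.inv (e0.hom x) = x := fun x => by
          change (e0.hom ≫ e0.inv) x = x
          rw [e0.hom_inv_id]; rfl
        rw [← hi a, ← hi b]; exact congrArg (fun y => e0.inv y) h
      apply hinj
      rw [map_zero]
      exact this
    have S0 := P.exact₀
    rw [ShortComplex.moduleCat_exact_iff] at S0
    obtain ⟨v, hv⟩ := S0 u hπu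
    have hv' : P.complex.d 1 0 v = u := hv
    have hαv : α₁' v + j = 0 := by
      apply Subtype.ext
      show α₀l (P.complex.d 1 0 v) + (j : R) = 0
      rw [hv']
      exact hz'
    show gl u + φ j = 0
    rw [← hv', hgl v, ← map_add, hαv, map_zero]
  have hinjσ : Function.Injective ((LinearMap.ker σ).liftQ σ le_rfl) := by
    rw [← LinearMap.ker_eq_bot]
    exact Submodule.ker_liftQ_eq_bot _ _ _ le_rfl
  have hsurjσ : Function.Surjective ((LinearMap.ker σ).liftQ σ le_rfl) := by
    intro x
    obtain ⟨v, hv⟩ := hσ x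
    exact ⟨Submodule.Quotient.mk v, by rwa [Submodule.liftQ_apply]⟩
  let eE : (((P.complex.X 0 : Type u) × J) ⧸ LinearMap.ker σ) ≃ₗ[R] R :=
    LinearEquiv.ofBijective _ ⟨hinjσ, hsurjσ⟩
  let τq : (((P.complex.X 0 : Type u) × J) ⧸ LinearMap.ker σ) →ₗ[R] A :=
    (LinearMap.ker σ).liftQ τ hle
  refine ⟨τq.comp (eE.symm : R →ₗ[R] _), ?_⟩
  intro x
  have h1 : eE.symm (x : R) = Submodule.Quotient.mk (0, x) := by
    rw [LinearEquiv.symm_apply_eq]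
    have : ((LinearMap.ker σ).liftQ σ le_rfl) (Submodule.Quotient.mk (0, x)) = (x : R) := by
      rw [Submodule.liftQ_apply]
      show α₀l 0 + (x : R) = (x : R)
      rw [map_zero, zero_add]
    exact this.symm
  show τq (eE.symm (x : R)) = φ x
  rw [h1, Submodule.liftQ_apply]
  show gl 0 + φ x = φ x
  rw [map_zero, zero_add]


end AuxProofs

section MainAux

variable {R : Type u} [CommRing R]

lemma gvIdeal_eq_top_of_dw (h : IsDWRing R) {J : Ideal R} (hJ : IsGVIdeal R J) : J = ⊤ := by
  by_contra hne
  obtain ⟨m, hm, hle⟩ := Ideal.exists_le_maximal J hne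
  have h1 : (1 : R) ∈ m := h m hm 1 J hJ (fun j hj => by simpa using hle hj)
  exact hm.ne_top ((Ideal.eq_top_iff_one m).2 h1)

lemma gvIdeal_eq_top_of_wfp
    (H : ∀ (M : Type u) [AddCommGroup M] [Module R M],
      Module.FinitePresentation R M → IsWFPProjective R M)
    {J : Ideal R} (hJ : IsGVIdeal R J) : J = ⊤ := by
  classical
  -- R/J is finitely presented
  have hfp : Module.FinitePresentation R (R ⧸ J) := by
    refine Module.finitePresentation_of_surjective J.mkQ (Submodule.mkQ_surjective J) ?_
    rw [Submodule.ker_mkQ]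
    exact hJ.1
  -- A := J / J²
  let K : Submodule R J := Submodule.comap (J : Submodule R R).subtype (J • (J : Submodule R R))
  let A := J ⧸ K
  have hann : ∀ j ∈ J, ∀ a : A, j • a = 0 := by
    intro j hj a
    obtain ⟨y, rfl⟩ := Submodule.Quotient.mk_surjective K a
    rw [← Submodule.Quotient.mk_smul]
    rw [Submodule.Quotient.mk_eq_zero]
    refine Submodule.mem_comap.2 ?_
    have : ((J : Submodule R R).subtype) (j • y) = j • (y : R) := rfl
    rw [this]
    exact Submodule.smul_mem_smul hj y.2
  have hwpure : IsAbsolutelyWPure R A := by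
    intro N _ _ hN e
    exact ⟨J, hJ, fun j hj => smul_extMod_eq_zero j (fun a => hann j hj a) e⟩
  have hss : Subsingleton (extMod R (R ⧸ J) A 1) := H (R ⧸ J) hfp A hwpure
  obtain ⟨ψ, hψ⟩ := extension_of_subsingleton_extMod J.mkQ (Submodule.mkQ_surjective J)
    (Submodule.ker_mkQ J) hss K.mkQ
  -- J = J * J
  obtain ⟨b, hb⟩ := Submodule.Quotient.mk_surjective K (ψ 1)
  have hJJ : (J : Submodule R R) ≤ J • (J : Submodule R R) := by
    intro j hj
    have h1 : K.mkQ (⟨j, hj⟩ : J) = Submodule.Quotient.mk (j • b) := by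
      rw [← hψ ⟨j, hj⟩]
      show ψ j = _
      have hψj : ψ j = j • ψ 1 := by
        rw [← map_smul, smul_eq_mul, mul_one]
      rw [hψj, ← hb, ← Submodule.Quotient.mk_smul]
    have h1' : (Submodule.Quotient.mk (⟨j, hj⟩ : J) : A) = Submodule.Quotient.mk (j • b) := h1
    have h2 : (⟨j, hj⟩ : J) - j • b ∈ K := (Submodule.Quotient.eq K).1 h1'
    have h3 : j - j • (b : R) ∈ J • (J : Submodule R R) := by
      simpa using Submodule.mem_comap.1 h2
    have h4 : j • (b : R) ∈ J • (J : Submodule R R) := Submodule.smul_mem_smul hj b.2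
    simpa using add_mem h3 h4
  obtain ⟨r, hr1, hr0⟩ :=
    Submodule.exists_sub_one_mem_and_smul_eq_zero_of_fg_of_le_smul J (J : Submodule R R)
      hJ.1 hJJ
  -- injectivity of R → Hom(J, R) forces r = 0
  have hr : r = 0 := by
    apply hJ.2.injective
    show r • J.subtype = (0 : R) • J.subtype
    apply LinearMap.ext
    intro x
    show r • (x : R) = (0 : R) • (x : R)
    rw [hr0 (x : R) x.2, zero_smul]
  rw [hr, zero_sub] at hr1
  have h1 : (1 : R) ∈ J := by simpa using J.neg_mem hr1
  exact (Ideal.eq_top_iff_one J).2 h1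

end MainAux

/-- `R` is a DW-ring iff every finitely presented module is `w`-FP-projective. -/
theorem isDWRing_iff_finitePresentation_wFPProjective (R : Type u) [CommRing R] :
    IsDWRing R ↔
      ∀ (M : Type u) [AddCommGroup M] [Module R M],
        Module.FinitePresentation R M → IsWFPProjective R M := by
  constructor
  · intro hDW M _ _ hfp A _ _ hA
    have h := hA M hfp
    have key : ∀ e : extMod R M A 1, e = 0 := by
      intro e
      obtain ⟨J, hJ, h0⟩ := h e
      have h1 : (1 : R) ∈ J := by
        rw [gvIdeal_eq_top_of_dw hDW hJ]; trivial
      simpa using h0 1 h1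
    exact ⟨fun a b => (key a).trans (key b).symm⟩
  · intro H m hm x J hGV hJx
    have hJT : J = ⊤ := gvIdeal_eq_top_of_wfp H hGV
    have h1 : (1 : R) ∈ J := by rw [hJT]; trivial
    simpa using hJx 1 h1
end

section
/- A commutative ring R is a DW-ring if and only if every FP-projective R-module is w-FP-projective. -/
open CategoryTheory

universe u

/-- `A` is absolutely pure (FP-injective) if `Ext^1_R(N, A) = 0` for every finitely
presented module `N`. -/
def IsAbsolutelyPure (R : Type u) [CommRing R]
    (A : Type u) [AddCommGroup A] [Module R A] : Prop :=
  ∀ (N : Type u) [AddCommGroup N] [Module R N], Module.FinitePresentation R N →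
    Subsingleton (extMod R N A 1)

/-- `M` is FP-projective if `Ext^1_R(M, A) = 0` for every absolutely pure module `A`. -/
def IsFPProjective (R : Type u) [CommRing R]
    (M : Type u) [AddCommGroup M] [Module R M] : Prop :=
  ∀ (A : Type u) [AddCommGroup A] [Module R A], IsAbsolutelyPure R A →
    Subsingleton (extMod R M A 1)

/-! ### Auxiliary material -/

noncomputable section WFPAuxSection
open CategoryTheory Limits

namespace WFPAux

section Res
variable {C : Type*} [Category C] [Abelian C] [EnoughProjectives C]

open CategoryTheory.Projective in
/-- A projective resolution starting from a chosen epimorphism from a projective object. -/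
def ofComplex' {Z X0 : C} (π0 : X0 ⟶ Z) : ChainComplex C ℕ :=
  ChainComplex.mk' X0 (syzygies π0) (d π0)
    (fun f => ⟨_, d f, (Category.assoc _ _ _).trans ((congrArg (π (kernel f) ≫ ·) (kernel.condition f)).trans comp_zero)⟩)

lemma ofComplex'_d_1_0 {Z X0 : C} (π0 : X0 ⟶ Z) :
    (ofComplex' π0).d 1 0 = Projective.d π0 := by
  simp [ofComplex']

lemma ofComplex'_exactAt_succ {Z X0 : C} (π0 : X0 ⟶ Z) (n : ℕ) :
    (ofComplex' π0).ExactAt (n + 1) := by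
  rw [HomologicalComplex.exactAt_iff' _ (n + 1 + 1) (n + 1) n (by simp) (by simp)]
  unfold ofComplex'
  let g := (ChainComplex.mk' X0 (Projective.syzygies π0) (Projective.d π0)
    (fun f => ⟨_, Projective.d f, (Category.assoc _ _ _).trans
      ((congrArg (Projective.π (kernel f) ≫ ·) (kernel.condition f)).trans comp_zero)⟩)).d (n + 1) n
  let α : ShortComplex.mk _ _ ((ChainComplex.mk' X0 (Projective.syzygies π0) (Projective.d π0)
      (fun f => ⟨_, Projective.d f, (Category.assoc _ _ _).trans
        ((congrArg (Projective.π (kernel f) ≫ ·) (kernel.condition f)).trans comp_zero)⟩)).d_comp_d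
        (n + 1 + 1) (n + 1) n) ⟶
      ShortComplex.mk (Projective.d g) g ((Category.assoc (Projective.π (kernel g)) (kernel.ι g) g).trans
        ((congrArg (Projective.π (kernel g) ≫ ·) (kernel.condition g)).trans comp_zero)) :=
    { τ₁ := (ChainComplex.mk'XIso X0 (Projective.syzygies π0) (Projective.d π0)
        (fun f => ⟨_, Projective.d f, (Category.assoc _ _ _).trans
          ((congrArg (Projective.π (kernel f) ≫ ·) (kernel.condition f)).trans comp_zero)⟩) n).hom
      τ₂ := 𝟙 _
      τ₃ := 𝟙 _
      comm₁₂ := by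
        rw [Category.comp_id]
        exact (ChainComplex.mk'_d _ _ _ _ n).symm
      comm₂₃ := (Category.id_comp _).trans (Category.comp_id _).symm }
  exact (ShortComplex.exact_iff_of_epi_of_isIso_of_mono α).2 (exact_d_f g)

instance ofComplex'_projective {Z X0 : C} (π0 : X0 ⟶ Z) [Projective X0] (n : ℕ) :
    Projective ((ofComplex' π0).X n) := by
  obtain (_ | _ | _ | n) := n
  · exact (inferInstance : Projective X0)
  all_goals apply Projective.projective_over

/-- The projective resolution associated to a chosen epimorphism from a projective object. -/
def resolutionOfEpi {Z X0 : C} (π0 : X0 ⟶ Z) [Projective X0] [Epi π0] :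
    ProjectiveResolution Z where
  complex := ofComplex' π0
  π := (ChainComplex.toSingle₀Equiv _ _).symm ⟨π0, by
          rw [ofComplex'_d_1_0]
          dsimp [Projective.d]
          exact (Category.assoc _ _ _).trans ((congrArg (Projective.π (kernel π0) ≫ ·) (kernel.condition π0)).trans comp_zero)⟩
  quasiIso := ⟨fun n => by
    cases n
    · rw [ChainComplex.quasiIsoAt₀_iff, ShortComplex.quasiIso_iff_of_zeros']
      · refine (ShortComplex.exact_and_epi_g_iff_of_iso ?_).2
          ⟨exact_d_f π0, by dsimp; infer_instance⟩
        exact ShortComplex.isoMk (Iso.refl _) (Iso.refl _) (Iso.refl _)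
          (by simp [ofComplex']; exact (Category.id_comp _).trans (Category.comp_id _).symm) (by simp; exact (Category.id_comp _).trans ((ChainComplex.toSingle₀Equiv_symm_apply_f_zero (C := ofComplex' π0) (X := Z) π0 _).symm.trans (Category.comp_id _).symm))
      all_goals rfl
    · rw [quasiIsoAt_iff_exactAt']
      · apply ofComplex'_exactAt_succ
      · apply ChainComplex.exactAt_succ_single_obj⟩

lemma resolutionOfEpi_π_f_zero {Z X0 : C} (π0 : X0 ⟶ Z) [Projective X0] [Epi π0] :
    (resolutionOfEpi π0).π.f 0 = π0 := by
  simp [resolutionOfEpi]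
  exact ChainComplex.toSingle₀Equiv_symm_apply_f_zero _ _

end Res

variable {R : Type u} [CommRing R]

lemma smul_homology_id_eq_zero (K : CochainComplex (ModuleCat.{u} R) ℕ) (n : ℕ) (r : R)
    (hX : r • 𝟙 (K.X n) = 0) : r • 𝟙 (K.homology n) = 0 := by
  have h1 : r • K.iCycles n = 0 := by
    rw [← Category.comp_id (K.iCycles n), ← Linear.comp_smul, hX, comp_zero]
  have hcyc : r • 𝟙 (K.cycles n) = 0 := by
    rw [← cancel_mono (K.iCycles n), Linear.smul_comp, Category.id_comp, h1, zero_comp]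
  have h2 : r • K.homologyπ n = 0 := by
    rw [← Category.id_comp (K.homologyπ n), ← Linear.smul_comp, hcyc, zero_comp]
  rw [← cancel_epi (K.homologyπ n), Linear.comp_smul, Category.comp_id, h2, comp_zero]

/-- If `r` annihilates `A`, then `r` annihilates every `Ext^n(N, A)`. -/
lemma smul_ext_eq_zero (N A : ModuleCat.{u} R) (n : ℕ) (r : R)
    (hr : ∀ a : A, r • a = 0)
    (x : ((Ext R (ModuleCat.{u} R) n).obj (Opposite.op N)).obj A) : r • x = 0 := by
  let P : ProjectiveResolution N := ProjectiveResolution.of N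
  let K := P.complex.linearYonedaObj R A
  have hX : r • 𝟙 (K.X n) = 0 := by
    refine ModuleCat.hom_ext (LinearMap.ext fun (f : P.complex.X n ⟶ A) => ?_)
    show r • f = 0
    refine ModuleCat.hom_ext (LinearMap.ext fun y => ?_)
    exact hr (f y)
  have hH := smul_homology_id_eq_zero K n r hX
  let e := P.isoExt (R := R) n A
  have he : r • 𝟙 (((Ext R (ModuleCat.{u} R) n).obj (Opposite.op N)).obj A) = 0 := by
    have : e.hom ≫ (r • 𝟙 (K.homology n)) ≫ e.inv
        = r • 𝟙 (((Ext R (ModuleCat.{u} R) n).obj (Opposite.op N)).obj A) := by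
      rw [Linear.smul_comp, Category.id_comp, Linear.comp_smul, e.hom_inv_id]
    rw [← this, hH, zero_comp, comp_zero]
  have happ := LinearMap.congr_fun (congrArg ModuleCat.Hom.hom he) x
  simp only [ModuleCat.hom_smul, ModuleCat.hom_id, ModuleCat.hom_zero, LinearMap.smul_apply,
    LinearMap.id_apply, LinearMap.zero_apply] at happ
  exact happ

/-- If there is a linear map on `ker (R → R/J)` which does not extend to `R`,
then `Ext^1(R/J, A)` is nontrivial. -/
lemma ext_one_nontrivial (J : Ideal R) (A : Type u) [AddCommGroup A] [Module R A]
    (h : (LinearMap.ker J.mkQ) →ₗ[R] A)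
    (hne : ∀ g : R →ₗ[R] A, h ≠ g ∘ₗ (LinearMap.ker J.mkQ).subtype) :
    Nontrivial (((Ext R (ModuleCat.{u} R) 1).obj
      (Opposite.op (ModuleCat.of R (R ⧸ J)))).obj (ModuleCat.of R A)) := by
  haveI : Projective (ModuleCat.of R R) :=
    (IsProjective.iff_projective.{u,u} (R := R) R).mp (inferInstance : Module.Projective R R)
  let p : ModuleCat.of R R ⟶ ModuleCat.of R (R ⧸ J) := ModuleCat.ofHom J.mkQ
  haveI : Epi p := (ModuleCat.epi_iff_surjective p).mpr (Submodule.mkQ_surjective J)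
  let P : ProjectiveResolution (ModuleCat.of R (R ⧸ J)) := resolutionOfEpi p
  have hd10 : ∀ y : P.complex.X 1, J.mkQ (P.complex.d 1 0 y) = 0 := by
    have h0 := P.complex_d_comp_π_f_zero
    rw [resolutionOfEpi_π_f_zero] at h0
    intro y
    exact LinearMap.congr_fun (congrArg ModuleCat.Hom.hom h0) y
  have hex : ∀ x : R, J.mkQ x = 0 → ∃ y : P.complex.X 1, P.complex.d 1 0 y = x := by
    have hE := (ShortComplex.moduleCat_exact_iff _).mp P.exact₀
    intro x hx
    have hx' : (ShortComplex.mk (P.complex.d 1 0) (P.π.f 0)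
        P.complex_d_comp_π_f_zero).g x = 0 := by
      show P.π.f 0 x = 0
      rw [resolutionOfEpi_π_f_zero]
      exact hx
    exact hE x hx'
  let Acat := ModuleCat.of R A
  let K := P.complex.linearYonedaObj R Acat
  have hmem : ∀ y : P.complex.X 1, P.complex.d 1 0 y ∈ LinearMap.ker J.mkQ := fun y =>
    hd10 y
  let d10' : P.complex.X 1 →ₗ[R] LinearMap.ker J.mkQ :=
    LinearMap.codRestrict _ (P.complex.d 1 0).hom hmem
  have hsurj : Function.Surjective d10' := by
    intro x
    obtain ⟨y, hy⟩ := hex x.1 (LinearMap.mem_ker.mp x.2)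
    exact ⟨y, Subtype.ext hy⟩
  let f : P.complex.X 1 ⟶ Acat := ModuleCat.ofHom (h ∘ₗ d10')
  let S := K.sc' 0 1 2
  have hgf : S.g f = 0 := by
    show K.d 1 2 f = 0
    rw [ChainComplex.linearYonedaObj_d]
    show CategoryStruct.comp (P.complex.d 2 1) f = 0
    refine ModuleCat.hom_ext (LinearMap.ext fun y => ?_)
    show h (d10' (P.complex.d 2 1 y)) = 0
    have : d10' (P.complex.d 2 1 y) = 0 := by
      refine Subtype.ext ?_
      show P.complex.d 1 0 (P.complex.d 2 1 y) = 0
      have := P.complex.d_comp_d 2 1 0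
      exact LinearMap.congr_fun (congrArg ModuleCat.Hom.hom this) y
    rw [this, map_zero]
  let c : LinearMap.ker S.g.hom := ⟨f, hgf⟩
  have hcls : S.moduleCatLeftHomologyData.π c ≠ 0 := by
    intro h0
    have h0' : (c : LinearMap.ker S.g.hom) ∈ LinearMap.range S.moduleCatToCycles := by
      have h0'' : (Submodule.Quotient.mk c :
          (LinearMap.ker S.g.hom ⧸ LinearMap.range S.moduleCatToCycles)) = 0 := h0
      exact (Submodule.Quotient.mk_eq_zero _).mp h0''
    obtain ⟨g, hg⟩ := h0'
    let g' : P.complex.X 0 ⟶ Acat := g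
    have hg' : S.f g = f := congrArg Subtype.val hg
    have hgd : CategoryStruct.comp (P.complex.d 1 0) g' = f := by
      rw [← hg']
      show _ = K.d 0 1 g
      rw [ChainComplex.linearYonedaObj_d]
      rfl
    refine hne g'.hom ?_
    refine LinearMap.ext fun x => ?_
    obtain ⟨y, hy⟩ := hsurj x
    have h1 : h x = f.hom y := by rw [← hy]; rfl
    have h2 : f.hom y
        = g'.hom (P.complex.d 1 0 y) := by
      rw [← hgd]; rfl
    have h3 : (P.complex.d 1 0) y = (x : R) := by
      rw [← hy]; rfl
    rw [h1, h2, h3]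
    rfl
  have hnon : Nontrivial S.moduleCatLeftHomologyData.H := ⟨_, _, hcls⟩
  let e : (((Ext R (ModuleCat.{u} R) 1).obj
      (Opposite.op (ModuleCat.of R (R ⧸ J)))).obj Acat) ≅ S.moduleCatLeftHomologyData.H :=
    (P.isoExt (R := R) 1 Acat) ≪≫
      (K.homologyIsoSc' 0 1 2 ((ComplexShape.up ℕ).prev_eq' (by simp))
        ((ComplexShape.up ℕ).next_eq' (by simp))) ≪≫ S.moduleCatHomologyIso
  refine ⟨e.inv (S.moduleCatLeftHomologyData.π c), 0, fun hEq => hcls ?_⟩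
  have := congrArg e.hom hEq
  have h2 : e.hom (e.inv (S.moduleCatLeftHomologyData.π c)) = S.moduleCatLeftHomologyData.π c := by
    have h3 := Iso.inv_hom_id e
    calc e.hom (e.inv (S.moduleCatLeftHomologyData.π c))
        = (e.inv ≫ e.hom) (S.moduleCatLeftHomologyData.π c) := rfl
      _ = (𝟙 S.moduleCatLeftHomologyData.H) (S.moduleCatLeftHomologyData.π c) := by rw [h3]
      _ = S.moduleCatLeftHomologyData.π c := rfl
  rw [h2, map_zero] at this
  exact this

end WFPAux

end WFPAuxSection

/-- `R` is a DW-ring iff every FP-projective module is `w`-FP-projective. -/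
theorem isDWRing_iff_fpProjective_wFPProjective (R : Type u) [CommRing R] :
    IsDWRing R ↔
      ∀ (M : Type u) [AddCommGroup M] [Module R M],
        IsFPProjective R M → IsWFPProjective R M := by
  constructor
  · -- forward: DW implies every GV-ideal is ⊤, hence abs w-pure = abs pure
    intro hDW
    have hGVtop : ∀ J : Ideal R, IsGVIdeal R J → J = ⊤ := by
      intro J hJ
      by_contra hne
      obtain ⟨m, hm, hJm⟩ := Ideal.exists_le_maximal J hne
      have h1 : (1 : R) ∈ m :=
        hDW m hm 1 J hJ (fun j hj => by rw [mul_one]; exact hJm hj)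
      exact hm.ne_top ((Ideal.eq_top_iff_one m).mpr h1)
    intro M _ _ hM A _ _ hA
    refine hM A ?_
    intro N _ _ hN
    have hGT := hA N hN
    refine subsingleton_of_forall_eq 0 ?_
    intro x
    obtain ⟨J, hJ, hx⟩ := hGT x
    have h1 := hx 1 (by rw [hGVtop J hJ]; trivial)
    simpa using h1
  · -- backward
    intro H
    have hGVtop : ∀ J : Ideal R, IsGVIdeal R J → J = ⊤ := by
      intro J hJ
      by_contra hJtop
      obtain ⟨m, hm, hJm⟩ := Ideal.exists_le_maximal J hJtop
      -- the annihilated quotient module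
      let A := (↥J) ⧸ (m • ⊤ : Submodule R ↥J)
      have hAnn : ∀ r ∈ m, ∀ a : A, r • a = 0 := by
        intro r hr a
        obtain ⟨y, rfl⟩ := Submodule.Quotient.mk_surjective _ a
        rw [← Submodule.Quotient.mk_smul, Submodule.Quotient.mk_eq_zero]
        exact Submodule.smul_mem_smul hr trivial
      -- the quotient is nonzero by Nakayama and the GV-property
      have hmJ : (m • ⊤ : Submodule R ↥J) ≠ ⊤ := by
        intro htop
        have hle : J ≤ m • J := by
          intro x hx
          have hmem : (⟨x, hx⟩ : ↥J) ∈ (m • ⊤ : Submodule R ↥J) := by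
            rw [htop]; trivial
          have h3 : Submodule.map J.subtype (m • ⊤ : Submodule R ↥J) = m • J := by
            rw [Submodule.map_smul'', Submodule.map_subtype_top]
          rw [← h3]
          exact ⟨_, hmem, rfl⟩
        obtain ⟨r, hr1, hr0⟩ :=
          Submodule.exists_sub_one_mem_and_smul_eq_zero_of_fg_of_le_smul m J hJ.1 hle
        have hr : r = 0 := by
          apply hJ.2.1
          show r • J.subtype = (0 : R) • J.subtype
          refine LinearMap.ext fun y => ?_
          show r • (y : R) = (0 : R) • J.subtype y
          rw [hr0 y y.2, zero_smul]
        rw [hr] at hr1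
        have : (1 : R) ∈ m := by simpa using m.neg_mem hr1
        exact hm.ne_top ((Ideal.eq_top_iff_one m).mpr this)
      obtain ⟨x0, hx0⟩ : ∃ x : ↥J, x ∉ (m • ⊤ : Submodule R ↥J) := by
        by_contra hc
        push_neg at hc
        exact hmJ (Submodule.eq_top_iff'.mpr hc)
      -- the non-extending map
      let eJ : ↥(LinearMap.ker J.mkQ) ≃ₗ[R] ↥J :=
        LinearEquiv.ofEq _ _ (Submodule.ker_mkQ J)
      let hmap : ↥(LinearMap.ker J.mkQ) →ₗ[R] A :=
        (Submodule.mkQ (m • ⊤ : Submodule R ↥J)) ∘ₗ eJ.toLinearMap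
      have hne : ∀ g : R →ₗ[R] A, hmap ≠ g ∘ₗ (LinearMap.ker J.mkQ).subtype := by
        intro g hEq
        have happ := LinearMap.congr_fun hEq (eJ.symm x0)
        have hL : hmap (eJ.symm x0) = Submodule.Quotient.mk x0 := by
          show Submodule.Quotient.mk (eJ (eJ.symm x0)) = _
          rw [LinearEquiv.apply_symm_apply]
        have hvR : ((eJ.symm x0 : ↥(LinearMap.ker J.mkQ)) : R) = (x0 : R) := rfl
        have hR : (g ∘ₗ (LinearMap.ker J.mkQ).subtype) (eJ.symm x0) = g (x0 : R) := by
          show g ((eJ.symm x0 : ↥(LinearMap.ker J.mkQ)) : R) = g (x0 : R)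
          rw [hvR]
        have hg0 : g ((x0 : R)) = 0 := by
          have : g ((x0 : R)) = (x0 : R) • g 1 := by
            rw [← map_smul, smul_eq_mul, mul_one]
          rw [this]
          exact hAnn _ (hJm x0.2) (g 1)
        rw [hL, hR, hg0] at happ
        rw [Submodule.Quotient.mk_eq_zero] at happ
        exact hx0 happ
      have hnon := WFPAux.ext_one_nontrivial J A hmap hne
      -- R/J is finitely presented, hence FP-projective
      have hFP : Module.FinitePresentation R (R ⧸ J) :=
        Module.finitePresentation_of_surjective J.mkQ (Submodule.mkQ_surjective J)
          (by rw [Submodule.ker_mkQ]; exact hJ.1)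
      have hFPproj : IsFPProjective R (R ⧸ J) := by
        intro A' _ _ hA'
        exact hA' (R ⧸ J) hFP
      -- A is absolutely w-pure
      have hAWP : IsAbsolutelyWPure R A := by
        intro N _ _ _
        intro x
        refine ⟨J, hJ, fun j hj => ?_⟩
        exact WFPAux.smul_ext_eq_zero (ModuleCat.of R N) (ModuleCat.of R A) 1 j
          (fun a => hAnn j (hJm hj) a) x
      have hsub : Subsingleton (extMod R (R ⧸ J) A 1) := H (R ⧸ J) hFPproj A hAWP
      exact (not_subsingleton_iff_nontrivial.mpr hnon) hsub
    intro m _ x Jgv hJgv hxm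
    have h1 : (1 : R) ∈ Jgv := by rw [hGVtop Jgv hJgv]; trivial
    simpa using hxm 1 h1
end

section
/- If M is a w-FP-projective R-module and P is a projective R-module, then P ⊗_R M is w-FP-projective. -/
open CategoryTheory

universe u

noncomputable section AuxWFP
namespace WFP

open CategoryTheory Limits CategoryTheory.Projective

section Cat

variable {C : Type*} [Category C] [Abelian C] [EnoughProjectives C]
variable {Z F : C} (π : F ⟶ Z) [Projective F] [Epi π]

set_option linter.unusedSectionVars false

/-- The canonical complex extending a given epimorphism from a projective object. -/
def ofComplex' : ChainComplex C ℕ :=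
  ChainComplex.mk' F (Projective.syzygies π) (Projective.d π)
    (fun f => ⟨_, Projective.d f, by
      change (Projective.π _ ≫ kernel.ι f) ≫ f = 0
      rw [Category.assoc, kernel.condition, comp_zero]⟩)

lemma ofComplex'_d_1_0 : (ofComplex' π).d 1 0 = Projective.d π := by
  simp [ofComplex']

lemma ofComplex'_d_2_1 : (ofComplex' π).d 2 1 = Projective.d (Projective.d π) := by
  simp [ofComplex', ChainComplex.mk']

lemma ofComplex'_exactAt_succ (n : ℕ) :
    (ofComplex' π).ExactAt (n + 1) := by
  rw [HomologicalComplex.exactAt_iff' _ (n + 1 + 1) (n + 1) n (by simp) (by simp)]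
  have hx := exact_d_f ((ofComplex' π).d (n + 1) n)
  refine ShortComplex.exact_of_iso ?_ hx
  refine ShortComplex.isoMk
    (ChainComplex.mk'XIso F (Projective.syzygies π) (Projective.d π) (fun f => ⟨_, Projective.d f, by
      change (Projective.π _ ≫ kernel.ι f) ≫ f = 0
      rw [Category.assoc, kernel.condition, comp_zero]⟩) n).symm
    (Iso.refl _) (Iso.refl _) ?_ ?_
  · have h := ChainComplex.mk'_d F (Projective.syzygies π) (Projective.d π) (fun f => ⟨_, Projective.d f, by
      change (Projective.π _ ≫ kernel.ι f) ≫ f = 0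
      rw [Category.assoc, kernel.condition, comp_zero]⟩) n
    exact ((Iso.eq_inv_comp _).mpr h.symm).symm.trans (Category.comp_id _).symm
  · exact (Category.id_comp _).trans (Category.comp_id _).symm

instance (n : ℕ) : Projective ((ofComplex' π).X n) := by
  obtain (_ | _ | _ | n) := n
  · exact ‹Projective F›
  all_goals apply Projective.projective_over

open Category in
/-- A projective resolution of `Z` built from an epimorphism `π : F ⟶ Z`
with projective source. -/
def resolutionOfEpi : ProjectiveResolution Z where
  complex := ofComplex' π
  π := (ChainComplex.toSingle₀Equiv _ _).symm ⟨π, by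
          rw [ofComplex'_d_1_0]
          exact (assoc _ _ _).trans
            ((congrArg (Projective.π (kernel π) ≫ ·) (kernel.condition π)).trans comp_zero)⟩
  quasiIso := ⟨fun n => by
    cases n
    · rw [ChainComplex.quasiIsoAt₀_iff, ShortComplex.quasiIso_iff_of_zeros']
      · refine (ShortComplex.exact_and_epi_g_iff_of_iso ?_).2
          ⟨exact_d_f π, by dsimp; infer_instance⟩
        exact ShortComplex.isoMk (Iso.refl _) (Iso.refl _) (Iso.refl _)
          (by erw [Category.id_comp, Category.comp_id]; exact (ofComplex'_d_1_0 π).symm)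
          (by erw [Category.id_comp, Category.comp_id]
              exact (ChainComplex.toSingle₀Equiv_symm_apply_f_zero (C := ofComplex' π) (X := Z) π _).symm)
      all_goals rfl
    · rw [quasiIsoAt_iff_exactAt']
      · apply ofComplex'_exactAt_succ
      · apply ChainComplex.exactAt_succ_single_obj⟩

end Cat

variable (R : Type u) [CommRing R]

lemma subsingleton_of_isZero {N : ModuleCat.{u} R} (h : IsZero N) : Subsingleton N :=
  ⟨fun a b => by
    have h1 : (𝟙 N : N ⟶ N) = 0 := h.eq_of_src _ _
    have : ∀ x : N, x = 0 := fun x => by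
      have : (𝟙 N : N ⟶ N) x = (0 : N ⟶ N) x := by rw [h1]
      simpa using this
    rw [this a, this b]⟩

lemma subsingleton_iff_isZero (N : ModuleCat.{u} R) : Subsingleton N ↔ IsZero N :=
  ⟨fun h => @ModuleCat.isZero_of_subsingleton _ _ _ h, subsingleton_of_isZero R⟩

/-- `Ext¹(X, A) = 0` iff every map from the kernel of a chosen projective
presentation of `X` extends. -/
lemma ext1_iff {X F A : ModuleCat.{u} R} (π : F ⟶ X) [Projective F] [Epi π] :
    Subsingleton (((Ext R (ModuleCat.{u} R) 1).obj (Opposite.op X)).obj A) ↔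
      ∀ φ : kernel π ⟶ A, ∃ ψ : F ⟶ A, kernel.ι π ≫ ψ = φ := by
  let Pres : ProjectiveResolution X := resolutionOfEpi π
  let K := Pres.complex.linearYonedaObj R A
  have e : (((Ext R (ModuleCat.{u} R) 1).obj (Opposite.op X)).obj A) ≅ K.homology 1 :=
    Pres.isoExt 1 A
  have h1 : Subsingleton (((Ext R (ModuleCat.{u} R) 1).obj (Opposite.op X)).obj A)
      ↔ K.ExactAt 1 := by
    rw [HomologicalComplex.exactAt_iff_isZero_homology, subsingleton_iff_isZero,
      e.isZero_iff]
  rw [h1, HomologicalComplex.exactAt_iff' K 0 1 2 (by simp) (by simp),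
    ShortComplex.moduleCat_exact_iff]
  have hd10 : Pres.complex.d 1 0 = Projective.d π := ofComplex'_d_1_0 π
  have hd21 : Pres.complex.d 2 1 = Projective.d (Projective.d π) := ofComplex'_d_2_1 π
  have hK : ∀ (f : Pres.complex.X 1 ⟶ A),
      ((K.sc' 0 1 2).g f = 0 ↔ kernel.ι (Projective.d π) ≫ f = 0) := by
    intro f
    have : (K.sc' 0 1 2).g f = Pres.complex.d 2 1 ≫ f := by
      rfl
    rw [this, hd21]
    constructor
    · intro h
      rw [show Projective.d (Projective.d π) =
        Projective.π (kernel (Projective.d π)) ≫ kernel.ι (Projective.d π) from rfl] at h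
      exact zero_of_epi_comp (Projective.π (kernel (Projective.d π)))
        ((Category.assoc _ _ _).symm.trans h)
    · intro h
      rw [show Projective.d (Projective.d π) =
        Projective.π (kernel (Projective.d π)) ≫ kernel.ι (Projective.d π) from rfl]
      exact (Category.assoc _ _ _).trans
        ((congrArg (Projective.π (kernel (Projective.d π)) ≫ ·) h).trans comp_zero)
  constructor
  · intro hex φ
    set f : Pres.complex.X 1 ⟶ A := Projective.π (kernel π) ≫ φ with hf
    have hcond : (K.sc' 0 1 2).g f = 0 := by
      rw [hK]
      have h2 : kernel.ι (Projective.d π) ≫ Projective.π (kernel π) = 0 := by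
        rw [← cancel_mono (kernel.ι π)]
        exact (Category.assoc _ _ _).trans ((kernel.condition (Projective.d π)).trans zero_comp.symm)
      rw [hf]
      exact (Category.assoc _ _ _).symm.trans ((congrArg (· ≫ φ) h2).trans zero_comp)
    obtain ⟨g, hg⟩ := hex f hcond
    have hg' : Pres.complex.d 1 0 ≫ g = f := by
      have : (K.sc' 0 1 2).f g = Pres.complex.d 1 0 ≫ g := by
        rfl
      rw [← this, hg]
    refine ⟨g, ?_⟩
    rw [hd10] at hg'
    exact (cancel_epi (Projective.π (kernel π))).mp
      (((Category.assoc _ _ _).symm.trans hg').trans hf)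
  · intro hlift f hf
    replace hf := (hK f).mp hf
    have hcond : kernel.ι (Projective.π (kernel π)) ≫ f = 0 := by
      have hl : kernel.ι (Projective.π (kernel π)) ≫ Projective.d π = 0 := by
        exact (Category.assoc _ _ _).symm.trans
          ((congrArg (· ≫ kernel.ι π) (kernel.condition _)).trans zero_comp)
      have := kernel.lift_ι (Projective.d π) (kernel.ι (Projective.π (kernel π))) hl
      rw [← this]
      exact (Category.assoc _ _ _).trans ((congrArg (kernel.lift _ _ hl ≫ ·) hf).trans comp_zero)
    set φ : kernel π ⟶ A := Abelian.epiDesc (Projective.π (kernel π)) f hcond with hφ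
    have hπφ : Projective.π (kernel π) ≫ φ = f := Abelian.comp_epiDesc _ _ _
    obtain ⟨ψ, hψ⟩ := hlift φ
    refine ⟨ψ, ?_⟩
    have : (K.sc' 0 1 2).f ψ = Pres.complex.d 1 0 ≫ ψ := by
      rfl
    rw [this, hd10, show Projective.d π = Projective.π (kernel π) ≫ kernel.ι π from rfl]
    exact (Category.assoc _ _ _).trans ((congrArg (Projective.π (kernel π) ≫ ·) hψ).trans hπφ)

/-- The module-theoretic version of `ext1_iff`. -/
lemma extMod_subsingleton_iff {X F A : Type u} [AddCommGroup X] [Module R X]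
    [AddCommGroup F] [Module R F] [AddCommGroup A] [Module R A]
    (hF : Module.Projective R F) (p : F →ₗ[R] X) (hp : Function.Surjective p) :
    Subsingleton (extMod R X A 1) ↔
      ∀ φ : (LinearMap.ker p) →ₗ[R] A, ∃ ψ : F →ₗ[R] A,
        ψ ∘ₗ (LinearMap.ker p).subtype = φ := by
  haveI : Projective (ModuleCat.of R F) := (IsProjective.iff_projective F).mp hF
  let π : ModuleCat.of R F ⟶ ModuleCat.of R X := ModuleCat.ofHom p
  haveI : Epi π := (ModuleCat.epi_iff_surjective π).mpr hp
  have h := ext1_iff R (A := ModuleCat.of R A) π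
  rw [show extMod R X A 1 =
    ((Ext R (ModuleCat.{u} R) 1).obj (Opposite.op (ModuleCat.of R X))).obj (ModuleCat.of R A)
    from rfl, h]
  let e := ModuleCat.kernelIsoKer π
  have hinv : e.inv ≫ kernel.ι π = ModuleCat.ofHom (LinearMap.ker π.hom).subtype :=
    ModuleCat.kernelIsoKer_inv_kernel_ι π
  have hhom : e.hom ≫ ModuleCat.ofHom (LinearMap.ker π.hom).subtype = kernel.ι π :=
    ModuleCat.kernelIsoKer_hom_ker_subtype π
  constructor
  · intro hcat φ
    obtain ⟨ψ, hψ⟩ := hcat (e.hom ≫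
      (ModuleCat.ofHom φ : ModuleCat.of R (LinearMap.ker π.hom) ⟶ ModuleCat.of R A))
    refine ⟨ψ.hom, ?_⟩
    have h1 : (ModuleCat.ofHom (LinearMap.ker π.hom).subtype ≫ ψ :
        ModuleCat.of R (LinearMap.ker π.hom) ⟶ ModuleCat.of R A) = ModuleCat.ofHom φ := by
      rw [← hinv, Category.assoc, hψ, ← Category.assoc, e.inv_hom_id, Category.id_comp]
    exact congrArg ModuleCat.Hom.hom h1
  · intro hmod φc
    obtain ⟨ψ, hψ⟩ := hmod ((e.inv ≫ φc :
      ModuleCat.of R (LinearMap.ker π.hom) ⟶ ModuleCat.of R A)).hom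
    refine ⟨ModuleCat.ofHom ψ, ?_⟩
    have h1 : (ModuleCat.ofHom (LinearMap.ker π.hom).subtype ≫ ModuleCat.ofHom ψ :
        ModuleCat.of R (LinearMap.ker π.hom) ⟶ ModuleCat.of R A) = e.inv ≫ φc :=
      ModuleCat.hom_ext hψ
    rw [← hhom, Category.assoc, h1, ← Category.assoc, e.hom_inv_id, Category.id_comp]

end WFP
end AuxWFP

open scoped TensorProduct in
set_option maxHeartbeats 1000000 in
/-- If `M` is `w`-FP-projective and `P` is projective, then `P ⊗ M` is `w`-FP-projective. -/
theorem wFPProjective_tensor (R : Type u) [CommRing R]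
    (M : Type u) [AddCommGroup M] [Module R M] (hM : IsWFPProjective R M)
    (P : Type u) [AddCommGroup P] [Module R P] (hP : Module.Projective R P) :
    IsWFPProjective R (P ⊗[R] M) := by
  classical
  intro A _ _ hA
  haveI hPi : Module.Projective R P := hP
  haveI hPflat : Module.Flat R P := Module.Flat.of_projective
  have hMA : Subsingleton (extMod R M A 1) := hM A hA
  set p : (M →₀ R) →ₗ[R] M := Finsupp.linearCombination R id with hpdef
  have hp : Function.Surjective p := Finsupp.linearCombination_id_surjective R M
  have hE := (WFP.extMod_subsingleton_iff R (A := A) inferInstance p hp).mp hMA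
  set K := LinearMap.ker p with hKdef
  set q : (P ⊗[R] (M →₀ R)) →ₗ[R] (P ⊗[R] M) := LinearMap.lTensor P p with hqdef
  have hq : Function.Surjective q := LinearMap.lTensor_surjective P hp
  rw [WFP.extMod_subsingleton_iff R (A := A) inferInstance q hq]
  intro φ
  set j : (P ⊗[R] K) →ₗ[R] (P ⊗[R] (M →₀ R)) := LinearMap.lTensor P K.subtype with hjdef
  have hj0 : q ∘ₗ j = 0 := by
    rw [hqdef, hjdef, ← LinearMap.lTensor_comp]
    have : p ∘ₗ K.subtype = 0 := LinearMap.ext fun x => x.2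
    rw [this, LinearMap.lTensor_zero]
  have hker : ∀ z, j z ∈ LinearMap.ker q := fun z => by
    show q (j z) = 0
    rw [← LinearMap.comp_apply, hj0, LinearMap.zero_apply]
  have hfe : Function.Exact K.subtype p := by
    intro y
    constructor
    · intro hy; exact ⟨⟨y, hy⟩, rfl⟩
    · rintro ⟨x, rfl⟩; exact x.2
  have hexact : Function.Exact j q := by
    have h := Module.Flat.lTensor_exact (R := R) (M := P) (N := K)
      (N' := (M →₀ R)) (N'' := M) hfe
    exact h
  set φ' : (P ⊗[R] K) →ₗ[R] A := φ ∘ₗ (j.codRestrict (LinearMap.ker q) hker) with hφ'def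
  obtain ⟨s, hs⟩ := Module.projective_def'.mp hP
  choose ψ hψ using fun (r : P) => hE (φ' ∘ₗ ((TensorProduct.mk R P K) r))
  set B : (P →₀ R) →ₗ[R] ((M →₀ R) →ₗ[R] A) := Finsupp.linearCombination R ψ with hBdef
  set Ψ : (P ⊗[R] (M →₀ R)) →ₗ[R] A := TensorProduct.lift (B ∘ₗ s) with hΨdef
  have key : ∀ (l : P →₀ R) (k : K),
      B l (K.subtype k) = φ' ((Finsupp.linearCombination R id l) ⊗ₜ[R] k) := by
    intro l k
    induction l using Finsupp.induction_linear with
    | zero => simp [hBdef]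
    | add f g hf hg =>
      simp only [map_add, LinearMap.add_apply, TensorProduct.add_tmul,
        Submodule.coe_subtype] at *
      rw [hf, hg]
    | single a b =>
      have h := LinearMap.congr_fun (hψ a) k
      simp only [LinearMap.comp_apply, TensorProduct.mk_apply, Submodule.coe_subtype] at h
      simp only [hBdef, Finsupp.linearCombination_single, LinearMap.smul_apply, Submodule.coe_subtype]
      rw [h, ← map_smul, TensorProduct.smul_tmul']
      rfl
  have hΨj : ∀ z : P ⊗[R] K, Ψ (j z) = φ' z := by
    intro z
    induction z using TensorProduct.induction_on with
    | zero => simp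
    | tmul r k =>
      have h1 : Ψ (j (r ⊗ₜ[R] k)) = B (s r) (K.subtype k) := by
        rw [hjdef, LinearMap.lTensor_tmul, hΨdef, TensorProduct.lift.tmul,
          LinearMap.comp_apply]
      have hsr : (Finsupp.linearCombination R id) (s r) = r := by
        have h2 := LinearMap.congr_fun hs r
        simpa using h2
      rw [h1, key (s r) k, hsr]
    | add x y hx hy => simp only [map_add, hx, hy]
  refine ⟨Ψ, ?_⟩
  apply LinearMap.ext
  rintro ⟨x, hx⟩
  obtain ⟨z, hz⟩ := (hexact x).mp hx
  have h1 : Ψ x = φ' z := by rw [← hz]; exact hΨj z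
  have h2 : φ ⟨x, hx⟩ = φ' z := by
    have hcr : (j.codRestrict (LinearMap.ker q) hker) z = ⟨x, hx⟩ :=
      Subtype.ext (by simpa using hz)
    rw [hφ'def, LinearMap.comp_apply, hcr]
  simpa [LinearMap.comp_apply] using h1.trans h2.symm
end

section
/- If M is a w-FP-projective R-module and P is a finitely generated projective R-module, then Hom_R(P,M) is w-FP-projective. -/
open CategoryTheory

universe u

noncomputable section AuxAdd
open CategoryTheory Limits

instance Functor.mapHomotopyCategory_additive' {ι : Type*} {V W : Type*} [Category V] [Category W]
    [Preadditive V] [Preadditive W] (F : V ⥤ W) [F.Additive] (c : ComplexShape ι) :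
    (F.mapHomotopyCategory c).Additive := by
  have : (HomotopyCategory.quotient V c ⋙ F.mapHomotopyCategory c).Additive :=
    Functor.additive_of_iso (F.mapHomotopyCategoryFactors c).symm
  exact Functor.additive_of_full_essSurj_comp (HomotopyCategory.quotient V c) _

instance projectiveResolutions_additive' {C : Type*} [Category C] [Abelian C]
    [HasProjectiveResolutions C] : (projectiveResolutions C).Additive where
  map_add {X Y f g} := by
    dsimp [projectiveResolutions]
    erw [← (HomotopyCategory.quotient C _).map_add]
    apply HomotopyCategory.eq_of_homotopy
    apply ProjectiveResolution.liftHomotopy (f + g)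
    · apply ProjectiveResolution.lift_commutes
    · rw [Preadditive.add_comp, ProjectiveResolution.lift_commutes,
        ProjectiveResolution.lift_commutes, ← Preadditive.comp_add, ← Functor.map_add]

instance Functor.leftDerivedToHomotopyCategory_additive' {C D : Type*} [Category C] [Category D]
    [Abelian C] [HasProjectiveResolutions C] [Abelian D] (F : C ⥤ D) [F.Additive] :
    F.leftDerivedToHomotopyCategory.Additive :=
  inferInstanceAs (projectiveResolutions C ⋙ F.mapHomotopyCategory _).Additive

instance Functor.leftDerived_additive' {C D : Type*} [Category C] [Category D]
    [Abelian C] [HasProjectiveResolutions C] [Abelian D] (F : C ⥤ D) [F.Additive] (n : ℕ) :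
    (F.leftDerived n).Additive :=
  inferInstanceAs (F.leftDerivedToHomotopyCategory ⋙
    HomotopyCategory.homologyFunctor D _ n).Additive

end AuxAdd

noncomputable section AuxExt

variable (R : Type u) [CommRing R]

/-- Ext in the first variable, as an additive functor. -/
def extFun (A : Type u) [AddCommGroup A] [Module R A] : (ModuleCat R)ᵒᵖ ⥤ ModuleCat R :=
  (((linearYoneda R (ModuleCat R)).obj (ModuleCat.of R A)).rightOp.leftDerived 1).leftOp

instance (A : Type u) [AddCommGroup A] [Module R A] : (extFun R A).Additive :=
  inferInstanceAs ((((linearYoneda R (ModuleCat R)).obj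
    (ModuleCat.of R A)).rightOp.leftDerived 1).leftOp.Additive)

variable {R}

theorem subsingleton_extMod_of_retract {A X Y : Type u}
    [AddCommGroup A] [Module R A] [AddCommGroup X] [Module R X] [AddCommGroup Y] [Module R Y]
    (f : X →ₗ[R] Y) (g : Y →ₗ[R] X) (h : g ∘ₗ f = LinearMap.id)
    (hY : Subsingleton (extMod R Y A 1)) : Subsingleton (extMod R X A 1) := by
  let G := extFun R A
  let f' : ModuleCat.of R X ⟶ ModuleCat.of R Y := ModuleCat.ofHom f
  let g' : ModuleCat.of R Y ⟶ ModuleCat.of R X := ModuleCat.ofHom g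
  have hc : f' ≫ g' = 𝟙 (ModuleCat.of R X) := ModuleCat.hom_ext h
  have key : G.map g'.op ≫ G.map f'.op = 𝟙 _ := by
    rw [← G.map_comp, ← op_comp, hc, op_id, G.map_id]
  constructor
  intro a b
  have hS : ∀ u v : (G.obj (Opposite.op (ModuleCat.of R Y))), u = v := fun u v =>
    @Subsingleton.elim _ hY u v
  have ha : (G.map f'.op) ((G.map g'.op) a) = a := by
    have := ConcreteCategory.congr_hom key a
    exact this
  have hb : (G.map f'.op) ((G.map g'.op) b) = b := by
    have := ConcreteCategory.congr_hom key b
    exact this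
  rw [← ha, ← hb, hS ((G.map g'.op) a) ((G.map g'.op) b)]

theorem subsingleton_extMod_prod {A X Y : Type u}
    [AddCommGroup A] [Module R A] [AddCommGroup X] [Module R X] [AddCommGroup Y] [Module R Y]
    (hX : Subsingleton (extMod R X A 1)) (hY : Subsingleton (extMod R Y A 1)) :
    Subsingleton (extMod R (X × Y) A 1) := by
  let G := extFun R A
  let p1 : ModuleCat.of R (X × Y) ⟶ ModuleCat.of R X := ModuleCat.ofHom (LinearMap.fst R X Y)
  let p2 : ModuleCat.of R (X × Y) ⟶ ModuleCat.of R Y := ModuleCat.ofHom (LinearMap.snd R X Y)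
  let i1 : ModuleCat.of R X ⟶ ModuleCat.of R (X × Y) := ModuleCat.ofHom (LinearMap.inl R X Y)
  let i2 : ModuleCat.of R Y ⟶ ModuleCat.of R (X × Y) := ModuleCat.ofHom (LinearMap.inr R X Y)
  have hid : p1 ≫ i1 + p2 ≫ i2 = 𝟙 (ModuleCat.of R (X × Y)) := by
    apply ModuleCat.hom_ext
    apply LinearMap.ext
    rintro ⟨x, y⟩
    show ((LinearMap.inl R X Y ∘ₗ LinearMap.fst R X Y)
        + (LinearMap.inr R X Y ∘ₗ LinearMap.snd R X Y)) (x, y) = (x, y)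
    simp
  suffices h : ∀ c : extMod R (X × Y) A 1, c = 0 by
    constructor; intro a b; rw [h a, h b]
  intro c
  have h1 : (G.map i1.op) c = 0 := @Subsingleton.elim _ hX _ _
  have h2 : (G.map i2.op) c = 0 := @Subsingleton.elim _ hY _ _
  have : (G.map (𝟙 (Opposite.op (ModuleCat.of R (X × Y))))) c = c :=
    by rw [G.map_id]; rfl
  rw [← this, ← op_id, ← hid]
  rw [op_add, op_comp, op_comp, G.map_add, G.map_comp, G.map_comp]
  have : ∀ (u v : (G.obj (Opposite.op (ModuleCat.of R (X × Y)))) ⟶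
      G.obj (Opposite.op (ModuleCat.of R (X × Y)))), (u + v) c = u c + v c := fun _ _ => rfl
  rw [this]
  show (G.map p1.op) ((G.map i1.op) c) + (G.map p2.op) ((G.map i2.op) c) = 0
  rw [h1, h2, map_zero, map_zero, add_zero]

end AuxExt

noncomputable section AuxPi
variable {R : Type u} [CommRing R]

theorem subsingleton_extMod_pi {A M : Type u}
    [AddCommGroup A] [Module R A] [AddCommGroup M] [Module R M]
    (hM : Subsingleton (extMod R M A 1)) (n : ℕ) :
    Subsingleton (extMod R (Fin n → M) A 1) := by
  induction n with
  | zero =>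
    exact subsingleton_extMod_of_retract (0 : (Fin 0 → M) →ₗ[R] M) 0
      (by apply LinearMap.ext; intro x; funext i; exact i.elim0) hM
  | succ n ih =>
    have hprod := subsingleton_extMod_prod hM ih
    let f : (Fin (n + 1) → M) →ₗ[R] (M × (Fin n → M)) :=
      LinearMap.prod (LinearMap.proj 0) (LinearMap.funLeft R M Fin.succ)
    let g : (M × (Fin n → M)) →ₗ[R] (Fin (n + 1) → M) :=
      { toFun := fun p => Fin.cons p.1 p.2
        map_add' := fun p q => by
          funext i
          induction i using Fin.cases <;> simp
        map_smul' := fun c p => by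
          funext i
          induction i using Fin.cases <;> simp }
    refine subsingleton_extMod_of_retract f g ?_ hprod
    apply LinearMap.ext
    intro x
    funext i
    induction i using Fin.cases <;>
      simp [f, g, LinearMap.funLeft_apply, LinearMap.proj_apply]

end AuxPi

theorem extMod_hom_subsingleton {R : Type u} [CommRing R]
    {M A : Type u} [AddCommGroup M] [Module R M] [AddCommGroup A] [Module R A]
    {P : Type u} [AddCommGroup P] [Module R P] [Module.Finite R P]
    (hP : Module.Projective R P) (hMA : Subsingleton (extMod R M A 1)) :
    Subsingleton (extMod R (P →ₗ[R] M) A 1) := by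
  haveI := hP
  obtain ⟨n, π, s, hsurj, hinj, hπs⟩ := Module.Finite.exists_comp_eq_id_of_projective R P
  have hpi := subsingleton_extMod_pi hMA n
  let i : (P →ₗ[R] M) →ₗ[R] (Fin n → M) :=
    { toFun := fun f => fun j => f (π (fun k => if j = k then 1 else 0))
      map_add' := fun f g => rfl
      map_smul' := fun c f => rfl }
  let r : (Fin n → M) →ₗ[R] (P →ₗ[R] M) :=
    { toFun := fun v =>
        { toFun := fun p => ∑ j, s p j • v j
          map_add' := fun p q => by
            show ∑ j, s (p + q) j • v j = (∑ j, s p j • v j) + ∑ j, s q j • v j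
            rw [← Finset.sum_add_distrib]
            refine Finset.sum_congr rfl fun j _ => ?_
            rw [map_add, Pi.add_apply, add_smul]
          map_smul' := fun c p => by
            show ∑ j, s (c • p) j • v j = c • ∑ j, s p j • v j
            rw [Finset.smul_sum]
            refine Finset.sum_congr rfl fun j _ => ?_
            rw [map_smul, Pi.smul_apply, smul_assoc] }
      map_add' := fun v w => by
        apply LinearMap.ext; intro p
        show ∑ j, s p j • (v + w) j = (∑ j, s p j • v j) + ∑ j, s p j • w j
        rw [← Finset.sum_add_distrib]
        exact Finset.sum_congr rfl fun j _ => by rw [Pi.add_apply, smul_add]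
      map_smul' := fun c v => by
        apply LinearMap.ext; intro p
        show ∑ j, s p j • (c • v) j = c • ∑ j, s p j • v j
        rw [Finset.smul_sum]
        exact Finset.sum_congr rfl fun j _ => by rw [Pi.smul_apply, smul_comm] }
  refine subsingleton_extMod_of_retract i r ?_ hpi
  apply LinearMap.ext
  intro f
  apply LinearMap.ext
  intro p
  show ∑ j, s p j • f (π (fun k => if j = k then 1 else 0)) = f p
  have : ∑ j, s p j • f (π (fun k => if j = k then 1 else 0))
      = f (π (∑ j, s p j • (fun k => if j = k then (1:R) else 0))) := by
    rw [map_sum, map_sum]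
    simp [map_smul]
  rw [this, ← pi_eq_sum_univ (s p)]
  exact DFunLike.congr_fun hπs p ▸ rfl

/-- If `M` is `w`-FP-projective and `P` is finitely generated projective, then
`Hom_R(P, M)` is `w`-FP-projective. -/
theorem wFPProjective_hom (R : Type u) [CommRing R]
    (M : Type u) [AddCommGroup M] [Module R M] (hM : IsWFPProjective R M)
    (P : Type u) [AddCommGroup P] [Module R P] [Module.Finite R P]
    (hP : Module.Projective R P) :
    IsWFPProjective R (P →ₗ[R] M) := by
  intro A _ _ hA
  exact extMod_hom_subsingleton hP (hM A hA)
end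

section
/- Let R be a coherent ring and 0 → A → B → C → 0 an exact sequence of R-modules with A absolutely w-pure. Then B is absolutely w-pure if and only if C is absolutely w-pure. -/
open CategoryTheory

universe u

def IsCoherentRing (R : Type u) [CommRing R] : Prop :=
  ∀ I : Ideal R, I.FG → Module.FinitePresentation R I

noncomputable section AuxProofs

variable {R : Type u} [CommRing R]

lemma isGVIdeal_top : IsGVIdeal R (⊤ : Ideal R) := by
  refine ⟨⟨{1}, by simp [Ideal.span_singleton_one]⟩, ?_, ?_⟩
  · intro r r' h
    simpa using LinearMap.congr_fun h ⟨1, trivial⟩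
  · intro φ
    refine ⟨φ ⟨1, trivial⟩, ?_⟩
    ext ⟨x, hx⟩
    have : (⟨x, hx⟩ : (⊤ : Ideal R)) = x • ⟨1, trivial⟩ := by
      ext; simp
    rw [this, map_smul]
    simp

lemma IsGVIdeal.mul {J₁ J₂ : Ideal R} (h₁ : IsGVIdeal R J₁) (h₂ : IsGVIdeal R J₂) :
    IsGVIdeal R (J₁ * J₂) := by
  have key : ∀ r : R, (∀ z ∈ J₁ * J₂, r * z = 0) → r = 0 := by
    intro r hr
    have : r • J₁.subtype = (0 : R) • J₁.subtype := by
      ext ⟨a, ha⟩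
      have : (r * a) • J₂.subtype = (0 : R) • J₂.subtype := by
        ext ⟨b, hb⟩
        simpa [mul_assoc] using hr (a * b) (Ideal.mul_mem_mul ha hb)
      simpa using h₂.2.1 this
    simpa using h₁.2.1 this
  refine ⟨Submodule.FG.mul h₁.1 h₂.1, ?_, ?_⟩
  · intro r r' h
    have hz : ∀ z ∈ J₁ * J₂, (r - r') * z = 0 := by
      intro z hz
      have := LinearMap.congr_fun h ⟨z, hz⟩
      simp only [LinearMap.smul_apply, Submodule.coe_subtype, smul_eq_mul] at this
      rw [sub_mul, this, sub_self]
    exact sub_eq_zero.mp (key _ hz)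
  · intro φ
    -- for each a in J₁, the map b ↦ φ (a*b) on J₂
    have gmem : ∀ (a : J₁) (b : J₂), (a : R) * (b : R) ∈ J₁ * J₂ :=
      fun a b => Ideal.mul_mem_mul a.2 b.2
    let g : J₁ → (J₂ →ₗ[R] R) := fun a =>
      { toFun := fun b => φ ⟨(a : R) * (b : R), gmem a b⟩
        map_add' := by
          intro b b'
          rw [← map_add]
          exact congrArg _ (Subtype.ext (by push_cast; ring))
        map_smul' := by
          intro c b
          rw [← map_smul]
          exact congrArg _ (Subtype.ext (by push_cast [smul_eq_mul, RingHom.id_apply]; ring)) }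
    have hg : ∀ a : J₁, (h₂.2.2 (g a)).choose • J₂.subtype = g a :=
      fun a => (h₂.2.2 (g a)).choose_spec
    let r_ : J₁ → R := fun a => (h₂.2.2 (g a)).choose
    let φ₁ : J₁ →ₗ[R] R :=
      { toFun := r_
        map_add' := by
          intro a a'
          apply h₂.2.1
          show r_ (a + a') • J₂.subtype = (r_ a + r_ a') • J₂.subtype
          rw [add_smul, hg, hg, hg]
          ext b
          show φ _ = φ _ + φ _
          rw [← map_add]
          exact congrArg _ (Subtype.ext (by push_cast; ring))
        map_smul' := by
          intro c a
          apply h₂.2.1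
          show r_ (c • a) • J₂.subtype = (c • r_ a) • J₂.subtype
          rw [smul_eq_mul, mul_smul, hg]
          ext b
          show φ _ = (c • (r_ a • J₂.subtype)) b
          rw [hg]
          show φ _ = c • φ _
          rw [← map_smul]
          exact congrArg _ (Subtype.ext (by push_cast [smul_eq_mul, RingHom.id_apply]; ring)) }
    obtain ⟨r, hr⟩ := h₁.2.2 φ₁
    refine ⟨r, ?_⟩
    ext ⟨z, hz⟩
    show r * z = φ ⟨z, hz⟩
    refine Submodule.mul_induction_on' (C := fun z hz => r * z = φ ⟨z, hz⟩) ?_ ?_ hz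
    · intro a ha b hb
      have h1 : φ ⟨a * b, _⟩ = g ⟨a, ha⟩ ⟨b, hb⟩ := rfl
      have h2 : g ⟨a, ha⟩ ⟨b, hb⟩ = r_ ⟨a, ha⟩ * b := by
        rw [← hg ⟨a, ha⟩]; rfl
      have h3 : r_ ⟨a, ha⟩ = r * a := by
        have := LinearMap.congr_fun hr ⟨a, ha⟩
        exact (by simpa using this.symm : φ₁ ⟨a, ha⟩ = r * a)
      rw [h1, h2, h3, mul_assoc]
    · intro x hx y hy ihx ihy
      rw [mul_add, ihx, ihy, ← map_add]
      congr 1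

lemma isGVTorsion_of_surjective {M M' : Type u} [AddCommGroup M] [Module R M]
    [AddCommGroup M'] [Module R M'] (e : M →ₗ[R] M') (he : Function.Surjective e)
    (h : IsGVTorsion R M) : IsGVTorsion R M' := by
  intro x
  obtain ⟨y, rfl⟩ := he x
  obtain ⟨J, hJ, hJy⟩ := h y
  exact ⟨J, hJ, fun j hj => by rw [← map_smul, hJy j hj, map_zero]⟩

lemma isGVTorsion_of_exact {M₁ M₂ M₃ : Type u} [AddCommGroup M₁] [Module R M₁]
    [AddCommGroup M₂] [Module R M₂] [AddCommGroup M₃] [Module R M₃]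
    (u : M₁ →ₗ[R] M₂) (v : M₂ →ₗ[R] M₃) (huv : Function.Exact u v)
    (h₁ : IsGVTorsion R M₁) (h₃ : IsGVTorsion R M₃) : IsGVTorsion R M₂ := by
  intro x
  obtain ⟨J, hJ, hJx⟩ := h₃ (v x)
  obtain ⟨s, hs⟩ := hJ.1
  have hmem : ∀ a : s, (a : R) • x ∈ Set.range u := by
    intro a
    rw [← huv ((a : R) • x), map_smul, hJx _ (hs ▸ Ideal.subset_span a.2)]
  choose y hy using hmem
  choose Jy hJy hJyk using fun a : s => h₁ (y a)
  classical
  refine ⟨J * ∏ a ∈ s.attach, Jy a, hJ.mul ?_, ?_⟩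
  · refine Finset.prod_induction _ _ (fun _ _ => IsGVIdeal.mul) (by rw [Ideal.one_eq_top]; exact isGVIdeal_top) ?_
    exact fun a _ => hJy a
  · intro j hj
    have : J * ∏ a ∈ s.attach, Jy a ≤
        LinearMap.ker (LinearMap.toSpanSingleton R M₂ x) := by
      rw [Ideal.mul_le]
      intro rj hrj t ht
      rw [mul_comm]
      have hker : ∀ z ∈ J, t • z • x = 0 := by
        intro z hz
        rw [← hs] at hz
        have hJle : Ideal.span (s : Set R) ≤
            LinearMap.ker (LinearMap.toSpanSingleton R M₂ (t • x)) := by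
          rw [Ideal.span_le]
          intro a ha
          have htJy : t ∈ Jy ⟨a, ha⟩ := by
            have : (∏ b ∈ s.attach, Jy b) ≤ Jy ⟨a, ha⟩ := by
              refine le_trans (Ideal.prod_le_inf) ?_
              exact Finset.inf_le (Finset.mem_attach _ _)
            exact this ht
          show a • t • x = 0
          rw [smul_comm, ← hy ⟨a, ha⟩, ← map_smul, hJyk ⟨a, ha⟩ t htJy, map_zero]
        have := hJle hz
        simpa [smul_comm t z x] using this
      show (t * rj) • x = 0
      rw [mul_smul]
      exact hker rj hrj
    exact this hj


/-- Postcomposition chain map on the Hom cochain complex. -/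
def postMap (P : ChainComplex (ModuleCat.{u} R) ℕ) {Y Z : ModuleCat.{u} R} (φ : Y ⟶ Z) :
    P.linearYonedaObj R Y ⟶ P.linearYonedaObj R Z where
  f n :=
    ModuleCat.ofHom
    { toFun := fun (ψ : P.X n ⟶ Y) => ψ ≫ φ
      map_add' := fun ψ ψ' => Preadditive.add_comp _ _ _ _ _ _
      map_smul' := fun c ψ => Linear.smul_comp _ _ _ _ _ _ }
  comm' := by
    intro i j hij
    ext ψ
    simp only [ChainComplex.linearYonedaObj_d, ModuleCat.hom_comp, LinearMap.coe_comp, Function.comp_apply]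
    show (P.d j i ≫ ψ) ≫ φ = P.d j i ≫ (ψ ≫ φ)
    exact Category.assoc (P.d j i) (ψ : P.X i ⟶ Y) φ


lemma exact_conj {M₁ M₂ M₃ N₁ N₂ N₃ : Type u}
    [AddCommGroup M₁] [Module R M₁] [AddCommGroup M₂] [Module R M₂]
    [AddCommGroup M₃] [Module R M₃] [AddCommGroup N₁] [Module R N₁]
    [AddCommGroup N₂] [Module R N₂] [AddCommGroup N₃] [Module R N₃]
    (u : M₁ →ₗ[R] M₂) (v : M₂ →ₗ[R] M₃) (hzero : ∀ x, v (u x) = 0)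
    (hex : ∀ y, v y = 0 → ∃ x, u x = y)
    (e₁ : N₁ ≃ₗ[R] M₁) (e₂ : N₂ ≃ₗ[R] M₂) (e₃ : N₃ ≃ₗ[R] M₃) :
    Function.Exact (fun x => e₂.symm (u (e₁ x))) (fun y => e₃.symm (v (e₂ y))) := by
  intro y
  constructor
  · intro h
    have : v (e₂ y) = 0 := by
      have := congrArg e₃ h
      simpa using this
    obtain ⟨x, hx⟩ := hex _ this
    exact ⟨e₁.symm x, by simp [hx]⟩
  · rintro ⟨x, rfl⟩
    simp [hzero]

variable (R) in
lemma extMod_les (N A B C : Type u) [AddCommGroup N] [Module R N]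
    [AddCommGroup A] [Module R A] [AddCommGroup B] [Module R B] [AddCommGroup C] [Module R C]
    (f : A →ₗ[R] B) (g : B →ₗ[R] C) (hf : Function.Injective f)
    (hg : Function.Surjective g) (hfg : Function.Exact f g) :
    ∃ (α : extMod R N A 1 →ₗ[R] extMod R N B 1) (β : extMod R N B 1 →ₗ[R] extMod R N C 1)
      (δ : extMod R N C 1 →ₗ[R] extMod R N A 2),
      Function.Exact α β ∧ Function.Exact β δ := by
  classical
  let P := ProjectiveResolution.of (ModuleCat.of R N)
  let S : ShortComplex (CochainComplex (ModuleCat R) ℕ) :=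
    ShortComplex.mk (postMap P.complex (ModuleCat.ofHom f)) (postMap P.complex (ModuleCat.ofHom g))
      (by
        ext n ψ
        show (ψ ≫ ModuleCat.ofHom f) ≫ ModuleCat.ofHom g = 0
        have : ModuleCat.ofHom f ≫ ModuleCat.ofHom g = 0 := by
          ext a
          exact hfg.apply_apply_eq_zero a
        exact (Category.assoc (ψ : P.complex.X n ⟶ ModuleCat.of R A) _ _).trans
          ((congrArg (fun k => (ψ : P.complex.X n ⟶ ModuleCat.of R A) ≫ k) this).trans
            Limits.comp_zero))
  have hS : S.ShortExact := by
    apply HomologicalComplex.shortExact_of_degreewise_shortExact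
    intro i
    refine ShortComplex.ShortExact.mk' ?_ ?_ ?_
    · -- exactness at middle
      rw [ShortComplex.moduleCat_exact_iff]
      intro (ψ : P.complex.X i ⟶ ModuleCat.of R B) hψ
      have hψ' : ψ ≫ ModuleCat.ofHom g = 0 := hψ
      have hmem : ∀ x, ψ x ∈ LinearMap.range f := by
        intro x
        have hgz : g (ψ x) = 0 := ConcreteCategory.congr_hom hψ' x
        rw [LinearMap.mem_range]
        obtain ⟨a, ha⟩ := (hfg (ψ x)).mp hgz
        exact ⟨a, ha⟩
      let e := LinearEquiv.ofInjective f hf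
      let ψ' : P.complex.X i →ₗ[R] LinearMap.range f :=
        LinearMap.codRestrict (LinearMap.range f) ψ.hom hmem
      refine ⟨ModuleCat.ofHom (e.symm.toLinearMap ∘ₗ ψ'), ?_⟩
      show ModuleCat.ofHom (e.symm.toLinearMap ∘ₗ ψ') ≫ ModuleCat.ofHom f = ψ
      have key : ∀ z : LinearMap.range f, f (e.symm z) = z := by
        intro z
        have h1 := e.apply_symm_apply z
        have h2 : (e (e.symm z) : B) = f (e.symm z) := rfl
        rw [← h2, h1]
      have heq : ModuleCat.ofHom (e.symm.toLinearMap ∘ₗ ψ') ≫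
          ModuleCat.ofHom f = ψ :=
        ModuleCat.hom_ext (LinearMap.ext fun x => key (ψ' x))
      exact heq
    · -- mono
      rw [ModuleCat.mono_iff_injective]
      intro (ψ : P.complex.X i ⟶ ModuleCat.of R A) (ψ' : P.complex.X i ⟶ ModuleCat.of R A) h
      have h' : ψ ≫ ModuleCat.ofHom f = ψ' ≫ ModuleCat.ofHom f := h
      have heq : ψ = ψ' :=
        ModuleCat.hom_ext (LinearMap.ext fun x => hf (ConcreteCategory.congr_hom h' x))
      exact heq
    · -- epi
      rw [ModuleCat.epi_iff_surjective]
      intro (φ : P.complex.X i ⟶ ModuleCat.of R C)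
      haveI : Epi (ModuleCat.ofHom g) := (ModuleCat.epi_iff_surjective _).mpr hg
      refine ⟨Projective.factorThru φ (ModuleCat.ofHom g), ?_⟩
      show Projective.factorThru φ (ModuleCat.ofHom g) ≫ ModuleCat.ofHom g = φ
      exact Projective.factorThru_comp _ _
  have hij : (ComplexShape.up ℕ).Rel 1 2 := rfl
  have h2 := hS.homology_exact₂ 1
  have h3 := hS.homology_exact₃ 1 2 hij
  rw [ShortComplex.moduleCat_exact_iff] at h2 h3
  have hz2 : HomologicalComplex.homologyMap S.f 1 ≫ HomologicalComplex.homologyMap S.g 1 = 0 := by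
    rw [← HomologicalComplex.homologyMap_comp, S.zero, HomologicalComplex.homologyMap_zero]
  have hz3 := hS.comp_δ 1 2 hij
  let eA := (P.isoExt (R := R) 1 (ModuleCat.of R A)).toLinearEquiv
  let eB := (P.isoExt (R := R) 1 (ModuleCat.of R B)).toLinearEquiv
  let eC := (P.isoExt (R := R) 1 (ModuleCat.of R C)).toLinearEquiv
  let eA2 := (P.isoExt (R := R) 2 (ModuleCat.of R A)).toLinearEquiv
  refine ⟨eB.symm.toLinearMap ∘ₗ ((HomologicalComplex.homologyMap S.f 1).hom :
      S.X₁.homology 1 →ₗ[R] S.X₂.homology 1) ∘ₗ eA.toLinearMap,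
    eC.symm.toLinearMap ∘ₗ ((HomologicalComplex.homologyMap S.g 1).hom :
      S.X₂.homology 1 →ₗ[R] S.X₃.homology 1) ∘ₗ eB.toLinearMap,
    eA2.symm.toLinearMap ∘ₗ ((hS.δ 1 2 hij).hom :
      S.X₃.homology 1 →ₗ[R] S.X₁.homology 2) ∘ₗ eC.toLinearMap, ?_, ?_⟩
  · exact exact_conj _ _ (fun x => ConcreteCategory.congr_hom hz2 x) h2 eA eB eC
  · exact exact_conj _ _ (fun x => ConcreteCategory.congr_hom hz3 x) h3 eB eC eA2


lemma extMod_dimension_shift (N K A : Type u) [AddCommGroup N] [Module R N]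
    [AddCommGroup K] [Module R K] [AddCommGroup A] [Module R A]
    (m : ℕ) (ι : K →ₗ[R] (Fin m → R)) (ρ : (Fin m → R) →ₗ[R] N)
    (hι : Function.Injective ι) (hρ : Function.Surjective ρ)
    (hexact : Function.Exact ι ρ) :
    Nonempty ((extMod R N A 2) ≃ₗ[R] (extMod R K A 1)) := by
  classical
  let Q := ProjectiveResolution.of (ModuleCat.of R K)
  let q0 : Q.complex.X 0 ⟶ ModuleCat.of R K := Q.π.f 0
  have hq0surj : Function.Surjective q0 := by
    have : Epi (Q.π.f 0) := inferInstance
    exact (ModuleCat.epi_iff_surjective (Q.π.f 0)).mp this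
  have hq0exact := Q.exact₀
  let Xs : ℕ → ModuleCat R := fun n => match n with
    | 0 => ModuleCat.of R (Fin m → R)
    | (k+1) => Q.complex.X k
  let ds : ∀ n, Xs (n+1) ⟶ Xs n := fun n => match n with
    | 0 => q0 ≫ ModuleCat.ofHom ι
    | (k+1) => Q.complex.d (k+1) k
  have hds : ∀ n, ds (n+1) ≫ ds n = 0 := by
    intro n
    match n with
    | 0 =>
      show Q.complex.d 1 0 ≫ (q0 ≫ ModuleCat.ofHom ι) = 0
      rw [← Category.assoc, show Q.complex.d 1 0 ≫ q0 = 0 from Q.complex_d_comp_π_f_zero,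
        Limits.zero_comp]
    | (k+1) =>
      show Q.complex.d (k+2) (k+1) ≫ Q.complex.d (k+1) k = 0
      exact Q.complex.d_comp_d _ _ _
  let PC : ChainComplex (ModuleCat R) ℕ := ChainComplex.of Xs ds hds
  have hd10 : PC.d 1 0 = ds 0 := by simp [PC, ChainComplex.of.d]
  have hd21 : PC.d 2 1 = Q.complex.d 1 0 := by unfold PC; exact ChainComplex.of_d (V := ModuleCat R) _ _ 1
  have hd32 : PC.d 3 2 = Q.complex.d 2 1 := by unfold PC; exact ChainComplex.of_d (V := ModuleCat R) _ _ 2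
  have hιρ : ModuleCat.ofHom ι ≫ ModuleCat.ofHom ρ = 0 :=
    ModuleCat.hom_ext (LinearMap.ext fun x => hexact.apply_apply_eq_zero x)
  have hcond : PC.d 1 0 ≫ ModuleCat.ofHom ρ = 0 := by
    rw [hd10]
    show (q0 ≫ ModuleCat.ofHom ι) ≫ ModuleCat.ofHom ρ = 0
    rw [Category.assoc, hιρ, Limits.comp_zero]
  let P : ProjectiveResolution (ModuleCat.of R N) :=
    { complex := PC
      projective := fun n => by
        match n with
        | 0 => exact ModuleCat.projective_of_free (Pi.basisFun R (Fin m))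
        | (k+1) =>
          show Projective (Q.complex.X k)
          infer_instance
      π := (ChainComplex.toSingle₀Equiv PC (ModuleCat.of R N)).symm ⟨ModuleCat.ofHom ρ, hcond⟩
      quasiIso := ⟨fun n => by
        cases n with
        | zero =>
          rw [ChainComplex.quasiIsoAt₀_iff, ShortComplex.quasiIso_iff_of_zeros']
          rotate_left
          · rfl
          · rfl
          · rfl
          constructor
          · rw [ShortComplex.moduleCat_exact_iff]
            intro (x : Fin m → R) hx
            have hx' : ρ x = 0 := hx
            obtain ⟨k, hk⟩ := (hexact x).mp hx'
            obtain ⟨y, hy⟩ := hq0surj k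
            refine ⟨y, ?_⟩
            show ι (q0 y) = x
            rw [hy, hk]
          · constructor
            intro Z u v huv
            have huv' : ModuleCat.ofHom ρ ≫ u = ModuleCat.ofHom ρ ≫ v := huv
            have : Function.Surjective (ModuleCat.ofHom ρ) := hρ
            exact ModuleCat.hom_ext (LinearMap.ext fun x => by
              obtain ⟨y, rfl⟩ := this x
              exact ConcreteCategory.congr_hom huv' y)
        | succ k =>
          rw [quasiIsoAt_iff_exactAt' _ _ (ChainComplex.exactAt_succ_single_obj _ _)]
          rw [HomologicalComplex.exactAt_iff' _ (k+2) (k+1) k (by simp) (by simp)]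
          match k with
          | 0 =>
            rw [ShortComplex.moduleCat_exact_iff]
            intro (x : Q.complex.X 0) hx
            have hx' : ι (q0 x) = 0 := hx
            have hq0x : q0 x = 0 := hι (by simpa using hx')
            rw [ShortComplex.moduleCat_exact_iff] at hq0exact
            obtain ⟨y, hy⟩ := hq0exact x hq0x
            refine ⟨y, ?_⟩
            show Q.complex.d 1 0 y = x
            exact hy
          | (j+1) =>
            have hv1 : PC.d (j+1+2) (j+1+1) = Q.complex.d (j+2) (j+1) :=
              by unfold PC; exact ChainComplex.of_d (V := ModuleCat R) _ _ (j+1+1)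
            have hv2 : PC.d (j+1+1) (j+1) = Q.complex.d (j+1) j :=
              by unfold PC; exact ChainComplex.of_d (V := ModuleCat R) _ _ (j+1)
            refine ShortComplex.exact_of_iso ?_ (Q.exact_succ j)
            refine ShortComplex.isoMk (Iso.refl _) (Iso.refl _) (Iso.refl _) ?_ ?_
            · show 𝟙 _ ≫ PC.d (j+1+2) (j+1+1) = Q.complex.d (j+2) (j+1) ≫ 𝟙 _
              rw [hv1, Category.id_comp, Category.comp_id]
            · show 𝟙 _ ≫ PC.d (j+1+1) (j+1) = Q.complex.d (j+1) j ≫ 𝟙 _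
              rw [hv2, Category.id_comp, Category.comp_id]⟩ }
  -- now the homology comparison
  let YA := ModuleCat.of R A
  let Kp := PC.linearYonedaObj R YA
  let Kq := Q.complex.linearYonedaObj R YA
  have comm₁ : (Iso.refl ((Kp.sc' 1 2 3).X₁)).hom ≫ (Kq.sc' 0 1 2).f =
      (Kp.sc' 1 2 3).f ≫ (Iso.refl ((Kp.sc' 1 2 3).X₂)).hom := by
    have key : ∀ (ψ : PC.X 1 ⟶ YA), (Q.complex.d 1 0 ≫ ψ : Q.complex.X 1 ⟶ YA) =
        PC.d 2 1 ≫ ψ := fun ψ => by rw [hd21]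
    have heq : (Iso.refl ((Kp.sc' 1 2 3).X₁)).hom ≫ (Kq.sc' 0 1 2).f =
        (Kp.sc' 1 2 3).f ≫ (Iso.refl ((Kp.sc' 1 2 3).X₂)).hom :=
      ModuleCat.hom_ext (LinearMap.ext fun ψ => key ψ)
    exact heq
  have comm₂ : (Iso.refl ((Kp.sc' 1 2 3).X₂)).hom ≫ (Kq.sc' 0 1 2).g =
      (Kp.sc' 1 2 3).g ≫ (Iso.refl ((Kp.sc' 1 2 3).X₃)).hom := by
    have key : ∀ (ψ : PC.X 2 ⟶ YA), (Q.complex.d 2 1 ≫ ψ : Q.complex.X 2 ⟶ YA) =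
        PC.d 3 2 ≫ ψ := fun ψ => by rw [hd32]
    have heq : (Iso.refl ((Kp.sc' 1 2 3).X₂)).hom ≫ (Kq.sc' 0 1 2).g =
        (Kp.sc' 1 2 3).g ≫ (Iso.refl ((Kp.sc' 1 2 3).X₃)).hom :=
      ModuleCat.hom_ext (LinearMap.ext fun ψ => key ψ)
    exact heq
  let isoMid : Kp.sc' 1 2 3 ≅ Kq.sc' 0 1 2 :=
    ShortComplex.isoMk (Iso.refl _) (Iso.refl _) (Iso.refl _) comm₁ comm₂
  let e : Kp.homology 2 ≅ Kq.homology 1 :=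
    (Kp.homologyIsoSc' 1 2 3 (by simp) (by simp)) ≪≫ ShortComplex.homologyMapIso isoMid ≪≫
      (Kq.homologyIsoSc' 0 1 2 (by simp) (by simp)).symm
  exact ⟨((P.isoExt (R := R) 2 YA) ≪≫ e ≪≫ (Q.isoExt (R := R) 1 YA).symm).toLinearEquiv⟩


end AuxProofs

section CoherentAux
variable {R : Type u} [CommRing R]

set_option synthInstance.maxHeartbeats 800000 in
set_option maxHeartbeats 1600000 in
lemma fp_submodule_of_coherent (hR : IsCoherentRing R) :
    ∀ (n : ℕ) (K : Submodule R (Fin n → R)), K.FG → Module.FinitePresentation R K := by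
  intro n
  induction n with
  | zero =>
    intro K hK
    have hsub : Subsingleton K :=
      ⟨fun a b => Subtype.ext (Subsingleton.elim (α := Fin 0 → R) _ _)⟩
    refine Module.finitePresentation_of_surjective (0 : R →ₗ[R] K)
      (fun x => ⟨0, Subsingleton.elim _ _⟩) ?_
    rw [LinearMap.ker_zero]
    exact Module.Finite.fg_top
  | succ n ih =>
    intro K hK
    haveI : Module.Finite R K := Module.Finite.iff_fg.mpr hK
    set p : K →ₗ[R] R := (LinearMap.proj (Fin.last n)).comp K.subtype with hp
    have hIfg : (LinearMap.range p).FG := by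
      rw [LinearMap.range_eq_map]
      exact Submodule.FG.map _ Module.Finite.fg_top
    haveI hI : Module.FinitePresentation R (LinearMap.range p) := hR _ hIfg
    have hsurj : Function.Surjective p.rangeRestrict := LinearMap.surjective_rangeRestrict p
    have hker : (LinearMap.ker p.rangeRestrict).FG :=
      Module.FinitePresentation.fg_ker p.rangeRestrict hsurj
    set q : ↥(LinearMap.ker p.rangeRestrict) →ₗ[R] (Fin n → R) :=
      (LinearMap.funLeft R R Fin.castSucc).comp
        (K.subtype.comp (LinearMap.ker p.rangeRestrict).subtype) with hq
    have hqinj : Function.Injective q := by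
      intro x y hxy
      apply Subtype.ext
      apply Subtype.ext
      funext i
      refine Fin.lastCases ?_ ?_ i
      · have hx : p x.1 = 0 := congrArg Subtype.val (LinearMap.mem_ker.mp x.2)
        have hy : p y.1 = 0 := congrArg Subtype.val (LinearMap.mem_ker.mp y.2)
        show (x.1 : Fin (n+1) → R) (Fin.last n) = (y.1 : Fin (n+1) → R) (Fin.last n)
        have hx' : (x.1 : Fin (n+1) → R) (Fin.last n) = 0 := hx
        have hy' : (y.1 : Fin (n+1) → R) (Fin.last n) = 0 := hy
        rw [hx', hy']
      · intro j
        have := congrFun hxy j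
        simpa [hq, LinearMap.funLeft] using this
    haveI : Module.Finite R ↥(LinearMap.ker p.rangeRestrict) := Module.Finite.iff_fg.mpr hker
    have hrfg : (LinearMap.range q).FG := by
      rw [LinearMap.range_eq_map]
      exact Submodule.FG.map _ Module.Finite.fg_top
    haveI := ih _ hrfg
    let e : ↥(LinearMap.ker p.rangeRestrict) ≃ₗ[R] ↥(LinearMap.range q) :=
      LinearEquiv.ofInjective q hqinj
    haveI : Module.FinitePresentation R ↥(LinearMap.ker p.rangeRestrict) :=
      @Module.FinitePresentation.of_equiv R _ _ _ (LinearMap.range q).addCommGroup _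
        (LinearMap.ker p.rangeRestrict).addCommGroup _ e.symm _
    exact Module.finitePresentation_of_ker p.rangeRestrict hsurj

lemma exists_fp_presentation (hR : IsCoherentRing R) (N : Type u) [AddCommGroup N] [Module R N]
    (hN : Module.FinitePresentation R N) :
    ∃ (m : ℕ) (ρ : (Fin m → R) →ₗ[R] N), Function.Surjective ρ ∧
      Module.FinitePresentation R (LinearMap.ker ρ) := by
  haveI := hN
  obtain ⟨m, ρ, hρ⟩ := Module.Finite.exists_fin' R N
  have hker := Module.FinitePresentation.fg_ker ρ hρ
  exact ⟨m, ρ, hρ, fp_submodule_of_coherent hR m _ hker⟩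


end CoherentAux


/-- Over a coherent ring, given `0 → A → B → C → 0` exact with `A` absolutely `w`-pure,
`B` is absolutely `w`-pure iff `C` is. -/
theorem isAbsolutelyWPure_iff_of_exact (R : Type u) [CommRing R] (hR : IsCoherentRing R)
    (A B C : Type u) [AddCommGroup A] [Module R A] [AddCommGroup B] [Module R B]
    [AddCommGroup C] [Module R C]
    (f : A →ₗ[R] B) (g : B →ₗ[R] C) (hf : Function.Injective f)
    (hg : Function.Surjective g) (hfg : Function.Exact f g)
    (hA : IsAbsolutelyWPure R A) :
    IsAbsolutelyWPure R B ↔ IsAbsolutelyWPure R C := by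
  constructor
  · intro hB N _ _ hN
    obtain ⟨α, β, δ, h1, h2⟩ := extMod_les R N A B C f g hf hg hfg
    obtain ⟨m, ρ, hρ, hKfp⟩ := exists_fp_presentation hR N hN
    obtain ⟨e2⟩ := extMod_dimension_shift N (↥(LinearMap.ker ρ)) A m
      (LinearMap.ker ρ).subtype ρ (Submodule.injective_subtype _) hρ ρ.exact_subtype_ker_map
    have hA2 : IsGVTorsion R (extMod R N A 2) :=
      isGVTorsion_of_surjective e2.symm.toLinearMap e2.symm.surjective
        (hA (↥(LinearMap.ker ρ)) hKfp)
    exact isGVTorsion_of_exact β δ h2 (hB N hN) hA2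
  · intro hC N _ _ hN
    obtain ⟨α, β, δ, h1, h2⟩ := extMod_les R N A B C f g hf hg hfg
    exact isGVTorsion_of_exact α β h1 (hA N hN) (hC N hN)
end
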